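/- arXiv:1905.00228 — 8 statements merged into one kernel-verified Lean document; each statement's English description precedes it below -/
import Mathlib

section
/- Assume positivity is inherited from 𝔓₁ to 𝔓₂. Then the set of bounded operators on ℌ₁ of the form ξ ↦ π(Aξ) (for ξ ∈ ℌ₁), where A ranges over all bounded operators on ℌ₂ with A𝔓₂ ⊆ 𝔓₂, coincides exactly with the set of all bounded operators B on ℌ₁ with B𝔓₁ ⊆ 𝔓₁. In particular: (a) for every bounded A on ℌ₂ with A𝔓₂ ⊆ 𝔓₂, the compression ξ ↦ π(Aξ) preserves 𝔓₁; (b) every bounded B on ℌ₁ with B𝔓₁ ⊆ 𝔓₁ is the compression of some bounded A on ℌ₂ with A𝔓₂ ⊆ 𝔓₂ (namely A = B ⊕ 0 with respect to ℌ₂ = ℌ₁ ⊕ ℌ₁⊥). -/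
open scoped ComplexOrder

noncomputable section

variable {H : Type*} [NormedAddCommGroup H] [InnerProductSpace ℂ H]

/-- A self-dual cone in a complex Hilbert space: a closed convex subset,
stable under multiplication by nonnegative reals, equal to its dual cone. -/
def IsSelfDualCone (P : Set H) : Prop :=
  IsClosed P ∧ Convex ℝ P ∧ (∀ t : ℝ, 0 ≤ t → ∀ x ∈ P, t • x ∈ P) ∧
    P = {η : H | ∀ ξ ∈ P, 0 ≤ (inner ℂ η ξ : ℂ)}

/-- `A ⊵ 0` w.r.t. `P`: the operator `A` preserves the positivity. -/
def PosPres (P : Set H) (A : H →L[ℂ] H) : Prop := ∀ x ∈ P, A x ∈ P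

/-- `η > 0` w.r.t. `P`: the vector `η` is strictly positive. -/
def StrictPos (P : Set H) (η : H) : Prop :=
  η ∈ P ∧ ∀ ξ ∈ P, ξ ≠ 0 → 0 < (inner ℂ ξ η : ℂ)

/-- Positivity is inherited from the self-dual cone `P₁` of the closed subspace `K`
to the self-dual cone `P₂` of the ambient space: `P₁ = π P₂` and `π ⊵ 0` w.r.t. `P₂`,
where `π` is the orthogonal projection onto `K`. -/
def Inherits {H₂ : Type*} [NormedAddCommGroup H₂] [InnerProductSpace ℂ H₂] [CompleteSpace H₂]
    (K : Submodule ℂ H₂) [CompleteSpace K] (P₁ : Set K) (P₂ : Set H₂) : Prop :=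
  P₁ = (fun x => K.orthogonalProjectionOnto x) '' P₂ ∧
    ∀ x ∈ P₂, ((K.orthogonalProjectionOnto x : H₂)) ∈ P₂

/-- Proposition 2.4: if positivity is inherited from `P₁` to `P₂`, then the compressions
`ξ ↦ π (A ξ)` of the positivity preserving operators `A` on `H₂` are exactly the
positivity preserving operators on `K`. -/
theorem compression_posPres_eq {H₂ : Type*} [NormedAddCommGroup H₂] [InnerProductSpace ℂ H₂]
    [CompleteSpace H₂] (K : Submodule ℂ H₂) [CompleteSpace K]
    (P₁ : Set K) (P₂ : Set H₂) (hP₁ : IsSelfDualCone P₁) (hP₂ : IsSelfDualCone P₂)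
    (hinh : Inherits K P₁ P₂) :
    {B : K →L[ℂ] K | ∃ A : H₂ →L[ℂ] H₂, PosPres P₂ A ∧
        ∀ ξ : K, B ξ = K.orthogonalProjectionOnto (A ξ)}
      = {B : K →L[ℂ] K | PosPres P₁ B} := by
  obtain ⟨h1, h2⟩ := hinh
  ext B
  simp only [Set.mem_setOf_eq]
  constructor
  · rintro ⟨A, hA, hBA⟩ x hx
    have hx2 : (x : H₂) ∈ P₂ := by
      rw [h1] at hx
      obtain ⟨y, hy, rfl⟩ := hx
      exact h2 y hy
    have hAx : A x ∈ P₂ := hA _ hx2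
    rw [hBA, h1]
    exact ⟨A x, hAx, rfl⟩
  · intro hB
    refine ⟨K.subtypeL.comp (B.comp (K.orthogonalProjectionOnto)), ?_, ?_⟩
    · intro y hy
      have hπy : (K.orthogonalProjectionOnto y : K) ∈ P₁ := by
        rw [h1]; exact ⟨y, hy, rfl⟩
      have hBπy : B (K.orthogonalProjectionOnto y) ∈ P₁ := hB _ hπy
      rw [h1] at hBπy
      obtain ⟨z, hz, hze⟩ := hBπy
      have : ((B (K.orthogonalProjectionOnto y) : K) : H₂) ∈ P₂ := by
        rw [← hze]; exact h2 z hz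
      simpa using this
    · intro ξ
      simp [Submodule.orthogonalProjectionOnto_mem_subspace_eq_self]
end
end

section
/- Let 𝔓 be a self-dual cone in a complex Hilbert space ℌ and let H, H' be bounded self-adjoint operators on ℌ such that e^{−βH} ⊵ 0 w.r.t. 𝔓 and e^{−βH'} ⊵ 0 w.r.t. 𝔓 for all β ≥ 0. Then for all s ≥ 0, t ≥ 0 and all β ≥ 0, e^{−β(sH + tH')} ⊵ 0 w.r.t. 𝔓. -/
open scoped ComplexOrder

noncomputable section

variable {H : Type*} [NormedAddCommGroup H] [InnerProductSpace ℂ H]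

/-- `A ⊳ 0` w.r.t. `P`: the operator `A` improves the positivity. -/
def PosImp (P : Set H) (A : H →L[ℂ] H) : Prop :=
  ∀ ξ ∈ P, ξ ≠ 0 → StrictPos P (A ξ)

/-- `E(A)`: the infimum of the (real) spectrum of `A`. -/
def specInf (A : H →L[ℂ] H) : ℝ := sInf {t : ℝ | (t : ℂ) ∈ spectrum ℂ A}

/-- `B` is ergodic w.r.t. `P`. -/
def IsErgodic (P : Set H) (B : H →L[ℂ] H) : Prop :=
  PosPres P B ∧ ∀ ξ ∈ P, ξ ≠ 0 → ∀ η ∈ P, η ≠ 0 → ∃ k : ℕ, 0 < (inner ℂ ξ ((B ^ k) η) : ℂ)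


section TrotterHelpers

open Nat Filter

variable [CompleteSpace H]

omit [CompleteSpace H] in
lemma norm_clm_pow_le (Z : H →L[ℂ] H) (n : ℕ) : ‖Z ^ n‖ ≤ ‖Z‖ ^ n := by
  cases n with
  | zero => simpa using (ContinuousLinearMap.one_def (R₁ := ℂ) (M₁ := H)) ▸ ContinuousLinearMap.norm_id_le
  | succ n => exact norm_pow_le' Z n.succ_pos

set_option maxHeartbeats 1000000 in
lemma norm_exp_le_exp_norm (Z : H →L[ℂ] H) : ‖NormedSpace.exp Z‖ ≤ Real.exp ‖Z‖ := by
  rw [NormedSpace.exp_eq_tsum ℂ, Real.exp_eq_exp_ℝ, NormedSpace.exp_eq_tsum_div]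
  refine (norm_tsum_le_tsum_norm (NormedSpace.norm_expSeries_summable' Z)).trans ?_
  refine Summable.tsum_le_tsum (fun n => ?_) (NormedSpace.norm_expSeries_summable' Z)
    (Real.summable_pow_div_factorial _)
  rw [norm_smul, norm_inv, Complex.norm_natCast, div_eq_inv_mul]
  have h1 : ‖Z ^ n‖ ≤ ‖Z‖ ^ n := norm_clm_pow_le Z n
  gcongr

set_option maxHeartbeats 1000000 in
lemma norm_exp_remainder (Z : H →L[ℂ] H) :
    ‖NormedSpace.exp Z - 1 - Z‖ ≤ ‖Z‖ ^ 2 * Real.exp ‖Z‖ := by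
  have hs := NormedSpace.expSeries_summable' (𝕂 := ℂ) Z
  have h2 : NormedSpace.exp Z
      = (∑ i ∈ Finset.range 2, ((i ! : ℂ))⁻¹ • Z ^ i)
        + ∑' n : ℕ, (((n+2)! : ℂ))⁻¹ • Z ^ (n+2) := by
    rw [NormedSpace.exp_eq_tsum ℂ]
    exact (hs.sum_add_tsum_nat_add 2).symm
  have hsum : (∑ i ∈ Finset.range 2, ((i ! : ℂ))⁻¹ • Z ^ i) = 1 + Z := by
    simp [Finset.sum_range_succ]
  have heq : NormedSpace.exp Z - 1 - Z = ∑' n : ℕ, (((n+2)! : ℂ))⁻¹ • Z ^ (n+2) := by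
    rw [h2, hsum]; abel
  rw [heq]
  have hsn : Summable fun n : ℕ => ‖(((n+2)! : ℂ))⁻¹ • Z ^ (n+2)‖ :=
    (summable_nat_add_iff 2).2 (NormedSpace.norm_expSeries_summable' Z)
  refine (norm_tsum_le_tsum_norm hsn).trans ?_
  have hbd : ∀ n : ℕ, ‖(((n+2)! : ℂ))⁻¹ • Z ^ (n+2)‖ ≤ ‖Z‖ ^ 2 * (‖Z‖ ^ n / (n ! : ℝ)) := by
    intro n
    rw [norm_smul, norm_inv, Complex.norm_natCast]
    have h1 : ‖Z ^ (n+2)‖ ≤ ‖Z‖ ^ (n+2) := norm_clm_pow_le Z _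
    have h2 : ((n+2)! : ℝ)⁻¹ ≤ ((n ! : ℝ))⁻¹ := by
      apply inv_anti₀
      · exact_mod_cast Nat.factorial_pos n
      · exact_mod_cast Nat.factorial_le (by omega)
    calc ((n+2)! : ℝ)⁻¹ * ‖Z ^ (n+2)‖ ≤ ((n ! : ℝ))⁻¹ * ‖Z‖ ^ (n+2) := by
          apply mul_le_mul h2 h1 (norm_nonneg _) (by positivity)
      _ = ‖Z‖ ^ 2 * (‖Z‖ ^ n / (n ! : ℝ)) := by ring
  refine (Summable.tsum_le_tsum hbd hsn ((Real.summable_pow_div_factorial ‖Z‖).mul_left _)).trans ?_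
  rw [tsum_mul_left, Real.exp_eq_exp_ℝ, NormedSpace.exp_eq_tsum_div]

set_option maxHeartbeats 1000000 in
lemma norm_exp_add_sub_exp_mul_exp (U V : H →L[ℂ] H) :
    ‖NormedSpace.exp (U + V) - NormedSpace.exp U * NormedSpace.exp V‖
      ≤ (‖U‖ + ‖V‖) ^ 2 * (4 + (‖U‖ + ‖V‖)) * Real.exp (‖U‖ + ‖V‖) := by
  set eU := NormedSpace.exp U with heU
  set eV := NormedSpace.exp V with heV
  set RU := eU - 1 - U with hRU
  set RV := eV - 1 - V with hRV
  set RW := NormedSpace.exp (U + V) - 1 - (U + V) with hRW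
  have hid : NormedSpace.exp (U + V) - eU * eV
      = RW - (RV + U * V + U * RV + RU * eV) := by
    have h1 : eU = 1 + U + RU := by rw [hRU]; abel
    have h2 : eV = 1 + V + RV := by rw [hRV]; abel
    rw [hRW, h1, h2]
    noncomm_ring
  rw [hid]
  set u := ‖U‖; set v := ‖V‖
  have hu : 0 ≤ u := norm_nonneg U
  have hv : 0 ≤ v := norm_nonneg V
  have euv : (1:ℝ) ≤ Real.exp (u + v) := Real.one_le_exp (by linarith)
  have hRWn : ‖RW‖ ≤ (u + v) ^ 2 * Real.exp (u + v) := by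
    refine (norm_exp_remainder (U + V)).trans ?_
    gcongr <;> [exact norm_add_le U V; exact norm_add_le U V]
  have hRVn : ‖RV‖ ≤ (u + v) ^ 2 * Real.exp (u + v) := by
    refine (norm_exp_remainder V).trans ?_
    gcongr <;> linarith
  have hUV : ‖U * V‖ ≤ (u + v) ^ 2 * Real.exp (u + v) := by
    refine (norm_mul_le U V).trans ?_
    nlinarith [sq_nonneg (u + v), mul_nonneg hu hv]
  have hURV : ‖U * RV‖ ≤ (u + v) * ((u + v) ^ 2 * Real.exp (u + v)) := by
    refine (norm_mul_le U RV).trans ?_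
    have := norm_exp_remainder V
    have h3 : v ^ 2 * Real.exp v ≤ (u + v) ^ 2 * Real.exp (u + v) := by
      gcongr <;> linarith
    have h4 : (0:ℝ) ≤ v ^ 2 * Real.exp v := by positivity
    nlinarith [Real.exp_pos (u + v), sq_nonneg (u + v)]
  have hRUeV : ‖RU * eV‖ ≤ (u + v) ^ 2 * Real.exp (u + v) := by
    refine (norm_mul_le RU eV).trans ?_
    have h5 : ‖RU‖ * ‖eV‖ ≤ u ^ 2 * Real.exp u * Real.exp v := by
      have := norm_exp_remainder U
      have := norm_exp_le_exp_norm V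
      have : (0:ℝ) ≤ ‖RU‖ := norm_nonneg _
      nlinarith [Real.exp_pos v, norm_nonneg eV, sq_nonneg u]
    refine h5.trans ?_
    rw [mul_assoc, ← Real.exp_add]
    gcongr <;> linarith
  have t1 : ‖RV + U * V + U * RV + RU * eV‖ ≤ ‖RV‖ + ‖U * V‖ + ‖U * RV‖ + ‖RU * eV‖ :=
    calc ‖RV + U * V + U * RV + RU * eV‖
        ≤ ‖RV + U * V + U * RV‖ + ‖RU * eV‖ := norm_add_le _ _
      _ ≤ (‖RV + U * V‖ + ‖U * RV‖) + ‖RU * eV‖ := by gcongr; exact norm_add_le _ _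
      _ ≤ ((‖RV‖ + ‖U * V‖) + ‖U * RV‖) + ‖RU * eV‖ := by gcongr; exact norm_add_le _ _
  have step : ‖RW - (RV + U * V + U * RV + RU * eV)‖
      ≤ ‖RW‖ + (‖RV‖ + ‖U * V‖ + ‖U * RV‖ + ‖RU * eV‖) :=
    (norm_sub_le _ _).trans (by linarith)
  refine step.trans ?_
  have hexpand : (u + v) ^ 2 * (4 + (u + v)) * Real.exp (u + v)
      = 4 * ((u + v) ^ 2 * Real.exp (u + v)) + (u + v) * ((u + v) ^ 2 * Real.exp (u + v)) := by
    ring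
  linarith

set_option maxHeartbeats 1000000 in
lemma norm_pow_sub_pow_le (a b : H →L[ℂ] H) (M : ℝ) (hM : 1 ≤ M) (ha : ‖a‖ ≤ M)
    (hb : ‖b‖ ≤ M) : ∀ n : ℕ, ‖a ^ n - b ^ n‖ ≤ n * M ^ n * ‖a - b‖ := by
  intro n
  induction n with
  | zero => simp
  | succ n ih =>
    have hsplit : a ^ (n+1) - b ^ (n+1) = (a ^ n - b ^ n) * a + b ^ n * (a - b) := by
      noncomm_ring
    rw [hsplit]
    have h1 : ‖(a ^ n - b ^ n) * a‖ ≤ (n * M ^ n * ‖a - b‖) * M :=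
      (norm_mul_le _ _).trans (by gcongr)
    have h2 : ‖b ^ n * (a - b)‖ ≤ M ^ n * ‖a - b‖ := by
      refine (norm_mul_le _ _).trans ?_
      gcongr
      exact (norm_clm_pow_le b n).trans (pow_le_pow_left₀ (norm_nonneg b) hb n)
    refine (norm_add_le _ _).trans ?_
    have hMn : M ^ n * ‖a - b‖ ≤ M ^ (n+1) * ‖a - b‖ :=
      mul_le_mul_of_nonneg_right (pow_le_pow_right₀ hM (Nat.le_succ n)) (norm_nonneg _)
    have heq : (n : ℝ) * M ^ n * ‖a - b‖ * M = n * M ^ (n+1) * ‖a - b‖ := by ring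
    push_cast
    linarith

set_option maxHeartbeats 1000000 in
/-- The Lie–Trotter product formula for bounded operators. -/
lemma trotter_product_formula (X Y : H →L[ℂ] H) :
    Tendsto (fun n : ℕ =>
        (NormedSpace.exp ((n : ℂ)⁻¹ • X) * NormedSpace.exp ((n : ℂ)⁻¹ • Y)) ^ n)
      atTop (nhds (NormedSpace.exp (X + Y))) := by
  set r := ‖X‖ + ‖Y‖ with hr
  have hr0 : 0 ≤ r := add_nonneg (norm_nonneg _) (norm_nonneg _)
  set C := r ^ 2 * (4 + r) * Real.exp r * Real.exp r with hC
  rw [← tendsto_sub_nhds_zero_iff]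
  apply squeeze_zero_norm' (a := fun n : ℕ => C / n) ?_ (tendsto_const_div_atTop_nhds_zero_nat C)
  filter_upwards [eventually_ge_atTop 1] with n hn
  have hn0 : (n : ℂ) ≠ 0 := by exact_mod_cast Nat.one_le_iff_ne_zero.mp hn
  have hnR : (0:ℝ) < (n : ℝ) := by exact_mod_cast hn
  set U := (n : ℂ)⁻¹ • X with hU
  set V := (n : ℂ)⁻¹ • Y with hV
  have hUn : ‖U‖ = ‖X‖ / n := by
    rw [hU, norm_smul, norm_inv, Complex.norm_natCast, div_eq_inv_mul]
  have hVn : ‖V‖ = ‖Y‖ / n := by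
    rw [hV, norm_smul, norm_inv, Complex.norm_natCast, div_eq_inv_mul]
  have huv : ‖U‖ + ‖V‖ = r / n := by rw [hUn, hVn, hr]; ring
  have huvr : r / n ≤ r := by
    apply div_le_self hr0; exact_mod_cast hn
  have huv0 : 0 ≤ r / n := div_nonneg hr0 hnR.le
  set a := NormedSpace.exp ((n : ℂ)⁻¹ • (X + Y)) with ha
  set b := NormedSpace.exp U * NormedSpace.exp V with hb
  have haU : (n : ℂ)⁻¹ • (X + Y) = U + V := by rw [hU, hV, smul_add]
  have hapow : a ^ n = NormedSpace.exp (X + Y) := by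
    letI : NormedAlgebra ℚ (H →L[ℂ] H) := NormedAlgebra.restrictScalars ℚ ℂ (H →L[ℂ] H)
    rw [ha, ← NormedSpace.exp_nsmul]
    congr 1
    rw [← Nat.cast_smul_eq_nsmul ℂ, smul_smul, mul_inv_cancel₀ hn0, one_smul]
  set M := Real.exp (r / n) with hM
  have hM1 : 1 ≤ M := Real.one_le_exp huv0
  have haM : ‖a‖ ≤ M := by
    rw [hM]
    refine (norm_exp_le_exp_norm _).trans (Real.exp_le_exp.2 ?_)
    rw [haU, ← huv]
    exact norm_add_le U V
  have hbM : ‖b‖ ≤ M := by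
    refine (norm_mul_le _ _).trans ?_
    have h1 := norm_exp_le_exp_norm U
    have h2 := norm_exp_le_exp_norm V
    calc ‖NormedSpace.exp U‖ * ‖NormedSpace.exp V‖
        ≤ Real.exp ‖U‖ * Real.exp ‖V‖ := by
          apply mul_le_mul h1 h2 (norm_nonneg _) (Real.exp_pos _).le
      _ = Real.exp (‖U‖ + ‖V‖) := (Real.exp_add _ _).symm
      _ = M := by rw [huv, hM]
  have hMn : M ^ n = Real.exp r := by
    rw [hM, ← Real.exp_nat_mul]
    congr 1
    field_simp
  have hab : ‖a - b‖ ≤ (r / n) ^ 2 * (4 + r) * Real.exp r := by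
    have := norm_exp_add_sub_exp_mul_exp U V
    rw [← haU] at this
    rw [huv] at this
    refine this.trans ?_
    gcongr
  have main : ‖a ^ n - b ^ n‖ ≤ C / n := by
    refine (norm_pow_sub_pow_le a b M hM1 haM hbM n).trans ?_
    rw [hMn]
    calc (n : ℝ) * Real.exp r * ‖a - b‖
        ≤ (n : ℝ) * Real.exp r * ((r / n) ^ 2 * (4 + r) * Real.exp r) := by
          gcongr
      _ = C / n := by rw [hC]; field_simp
  calc ‖b ^ n - NormedSpace.exp (X + Y)‖ = ‖a ^ n - b ^ n‖ := by
        rw [hapow, norm_sub_rev]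
    _ ≤ C / n := main

end TrotterHelpers

lemma posPres_pow {P : Set H} {B : H →L[ℂ] H} (h : PosPres P B) (n : ℕ) : PosPres P (B ^ n) := by
  induction n with
  | zero => intro x hx; simpa using hx
  | succ n ih =>
    intro x hx
    rw [pow_succ, ContinuousLinearMap.mul_apply]
    exact ih _ (h x hx)


/-- Proposition 2.2 (via the Trotter product formula): if `e^{-βH}` and `e^{-βH'}`
preserve positivity w.r.t. `P` for all `β ≥ 0`, then so does `e^{-β(sH + tH')}`
for all `s, t, β ≥ 0`. -/
theorem exp_combination_posPres [CompleteSpace H] (P : Set H) (hP : IsSelfDualCone P)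
    (A A' : H →L[ℂ] H) (hA : IsSelfAdjoint A) (hA' : IsSelfAdjoint A')
    (hexpA : ∀ β : ℝ, 0 ≤ β → PosPres P (NormedSpace.exp (-(β : ℂ) • A)))
    (hexpA' : ∀ β : ℝ, 0 ≤ β → PosPres P (NormedSpace.exp (-(β : ℂ) • A'))) :
    ∀ s t β : ℝ, 0 ≤ s → 0 ≤ t → 0 ≤ β →
      PosPres P (NormedSpace.exp (-(β : ℂ) • ((s : ℂ) • A + (t : ℂ) • A'))) := by
  intro s t β hs ht hβ x hx
  obtain ⟨hclosed, -, -, -⟩ := hP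
  set X : H →L[ℂ] H := -((β * s : ℝ) : ℂ) • A with hX
  set Y : H →L[ℂ] H := -((β * t : ℝ) : ℂ) • A' with hY
  have hXY : -(β : ℂ) • ((s : ℂ) • A + (t : ℂ) • A') = X + Y := by
    rw [hX, hY]
    push_cast
    module
  rw [hXY]
  have hmem : ∀ n : ℕ,
      ((NormedSpace.exp ((n : ℂ)⁻¹ • X) * NormedSpace.exp ((n : ℂ)⁻¹ • Y)) ^ n) x ∈ P := by
    intro n
    rcases Nat.eq_zero_or_pos n with h0 | hpos
    · subst h0; simpa using hx
    · have hn0 : (n : ℂ) ≠ 0 := by exact_mod_cast hpos.ne'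
      have hXn : (n : ℂ)⁻¹ • X = -(((β * s / n : ℝ)) : ℂ) • A := by
        rw [hX, smul_smul]
        congr 1
        push_cast
        field_simp
      have hYn : (n : ℂ)⁻¹ • Y = -(((β * t / n : ℝ)) : ℂ) • A' := by
        rw [hY, smul_smul]
        congr 1
        push_cast
        field_simp
      have hpos1 : PosPres P (NormedSpace.exp ((n : ℂ)⁻¹ • X)) := by
        rw [hXn]
        exact hexpA _ (by positivity)
      have hpos2 : PosPres P (NormedSpace.exp ((n : ℂ)⁻¹ • Y)) := by
        rw [hYn]
        exact hexpA' _ (by positivity)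
      have hmul : PosPres P
          (NormedSpace.exp ((n : ℂ)⁻¹ • X) * NormedSpace.exp ((n : ℂ)⁻¹ • Y)) := by
        intro y hy
        rw [ContinuousLinearMap.mul_apply]
        exact hpos1 _ (hpos2 _ hy)
      exact posPres_pow hmul n x hx
  have htend : Filter.Tendsto (fun n : ℕ =>
      ((NormedSpace.exp ((n : ℂ)⁻¹ • X) * NormedSpace.exp ((n : ℂ)⁻¹ • Y)) ^ n) x)
      Filter.atTop (nhds (NormedSpace.exp (X + Y) x)) :=
    ((ContinuousLinearMap.apply ℂ H x).continuous.tendsto _).comp (trotter_product_formula X Y)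
  exact hclosed.mem_of_tendsto htend (Filter.Eventually.of_forall hmem)
end
end

section
/- Let A be a bounded self-adjoint operator on a nontrivial complex Hilbert space ℌ equipped with a self-dual cone 𝔓, and let E(A) be the infimum of the spectrum of A. Then the following are equivalent: (i) e^{−βA} ⊵ 0 w.r.t. 𝔓 for all β ≥ 0; (ii) for every real s > −E(A), the operator A + s·1 is invertible in the algebra of bounded operators and (A + s·1)^{−1} ⊵ 0 w.r.t. 𝔓. -/
open scoped ComplexOrder

noncomputable section

variable {H : Type*} [NormedAddCommGroup H] [InnerProductSpace ℂ H]

/-! ### Auxiliary real-analysis estimates -/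

lemma real_est_resolvent {t v : ℝ} (ht : 0 < t) (hv : 0 < v) (hu : t * v ≤ 1) :
    |t * (1 - Real.exp (-(t * v)))⁻¹ - v⁻¹| ≤ 3 * t := by
  set u := t * v with hu_def
  have hu0 : 0 < u := mul_pos ht hv
  have h1 : Real.exp (-u) < 1 := Real.exp_lt_one_iff.2 (by linarith)
  have hd : 0 < 1 - Real.exp (-u) := by linarith
  have h2 : 1 - Real.exp (-u) ≤ u := by
    have := Real.add_one_le_exp (-u); linarith
  have hee : Real.exp u * Real.exp (-u) = 1 := by rw [← Real.exp_add]; simp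
  have h3 : u * Real.exp (-u) ≤ 1 - Real.exp (-u) := by
    have h' : (u + 1) * Real.exp (-u) ≤ Real.exp u * Real.exp (-u) :=
      mul_le_mul_of_nonneg_right (Real.add_one_le_exp u) (Real.exp_pos _).le
    rw [hee] at h'
    nlinarith [Real.exp_pos (-u)]
  have hlow : v⁻¹ ≤ t * (1 - Real.exp (-u))⁻¹ := by
    rw [← div_eq_mul_inv, le_div_iff₀ hd, inv_mul_le_iff₀ hv]
    calc 1 - Real.exp (-u) ≤ u := h2
      _ = v * t := by rw [hu_def]; ring
  have he : Real.exp u ≤ 3 := by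
    calc Real.exp u ≤ Real.exp 1 := Real.exp_le_exp.2 hu
      _ ≤ 3 := by have := Real.exp_one_lt_d9; linarith
  have h4 : Real.exp u - 1 ≤ u * Real.exp u := by nlinarith [Real.exp_pos u, Real.exp_pos (-u)]
  have hup : t * (1 - Real.exp (-u))⁻¹ ≤ Real.exp u * v⁻¹ := by
    rw [← div_eq_mul_inv, div_le_iff₀ hd]
    have h5 : Real.exp u * v⁻¹ * (u * Real.exp (-u)) ≤ Real.exp u * v⁻¹ * (1 - Real.exp (-u)) :=
      mul_le_mul_of_nonneg_left h3 (by positivity)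
    refine le_trans ?_ h5
    have hveq : v⁻¹ * u = t := by rw [hu_def]; field_simp
    nlinarith [Real.exp_pos u, Real.exp_pos (-u)]
  rw [abs_of_nonneg (by linarith)]
  have h6 : u * v⁻¹ = t := by rw [hu_def]; field_simp
  have h7 : (Real.exp u - 1) * v⁻¹ ≤ u * Real.exp u * v⁻¹ :=
    mul_le_mul_of_nonneg_right h4 (by positivity)
  calc t * (1 - Real.exp (-u))⁻¹ - v⁻¹ ≤ Real.exp u * v⁻¹ - v⁻¹ := by linarith
    _ = (Real.exp u - 1) * v⁻¹ := by ring
    _ ≤ u * Real.exp u * v⁻¹ := h7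
    _ = t * Real.exp u := by rw [← h6]; ring
    _ ≤ t * 3 := mul_le_mul_of_nonneg_left he ht.le
    _ = 3 * t := by ring

lemma real_est_exp {β x : ℝ} {n : ℕ} {C : ℝ} (hC : |β * x| ≤ C) (hC0 : 0 < C)
    (hn1 : C / n ≤ 1/2) (hn2 : 2 * C^2 / n ≤ 1) (hn0 : 0 < n) :
    |Real.exp (-(β * x)) - Real.exp (-((n:ℝ) * Real.log (1 + β * x / n)))| ≤
      4 * Real.exp C * C^2 / n := by
  have hnR : (0:ℝ) < n := Nat.cast_pos.2 hn0
  set u := β * x / n with hu_def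
  have huabs : |u| ≤ C / n := by
    rw [hu_def, abs_div, abs_of_nonneg hnR.le]
    gcongr
  have huhalf : |u| ≤ 1/2 := le_trans huabs hn1
  have hw : (0:ℝ) < 1 + u := by
    have := abs_le.1 huhalf; linarith
  have hlog1 : Real.log (1 + u) ≤ u := by
    have := Real.log_le_sub_one_of_pos hw; linarith
  have hlog2 : u - 2 * u^2 ≤ Real.log (1 + u) := by
    have h := Real.one_sub_inv_le_log_of_pos hw
    have habs := abs_le.1 huhalf
    have hinv : (1 + u)⁻¹ = 1 - u / (1 + u) := by field_simp; ring
    have : u - 2 * u^2 ≤ u / (1 + u) := by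
      rw [div_eq_mul_inv, ← sub_nonneg]
      have : u * (1+u)⁻¹ - (u - 2*u^2) = (u^2 * (1 + 2*u)) * (1+u)⁻¹ := by
        field_simp
        ring
      rw [this]
      have : (0:ℝ) ≤ 1 + 2*u := by linarith
      positivity
    rw [hinv] at h; linarith
  have hdiff : |β * x - (n:ℝ) * Real.log (1 + u)| ≤ 2 * C^2 / n := by
    have hax : β * x = (n:ℝ) * u := by rw [hu_def]; field_simp
    rw [hax, ← mul_sub, abs_mul, abs_of_nonneg hnR.le]
    have h8 : |u - Real.log (1 + u)| ≤ 2 * u^2 := by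
      rw [abs_of_nonneg (by linarith)]; linarith
    calc (n:ℝ) * |u - Real.log (1 + u)| ≤ (n:ℝ) * (2 * u^2) := by
          exact mul_le_mul_of_nonneg_left h8 hnR.le
      _ ≤ (n:ℝ) * (2 * (C/n)^2) := by
          have habs := abs_le.1 huabs
          have : u^2 ≤ (C/n)^2 := sq_le_sq' habs.1 habs.2
          nlinarith
      _ = 2 * C^2 / n := by field_simp
  set a := β * x with ha_def
  set b := (n:ℝ) * Real.log (1 + u) with hb_def
  have hab1 : |a - b| ≤ 1 := le_trans hdiff hn2
  have haC : -a ≤ C := by have := abs_le.1 hC; linarith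
  have key : Real.exp (-b) = Real.exp (-a) * Real.exp (a - b) := by
    rw [← Real.exp_add]; ring_nf
  have h9 : Real.exp (-a) - Real.exp (-b) = -(Real.exp (-a) * (Real.exp (a-b) - 1)) := by
    rw [key]; ring
  rw [h9, abs_neg, abs_mul, abs_of_pos (Real.exp_pos _)]
  have h10 : |Real.exp (a-b) - 1| ≤ 2 * |a - b| := Real.abs_exp_sub_one_le hab1
  have h11 : Real.exp (-a) ≤ Real.exp C := Real.exp_le_exp.2 haC
  calc Real.exp (-a) * |Real.exp (a-b) - 1| ≤ Real.exp C * (2 * (2*C^2/n)) := by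
        apply mul_le_mul h11 (le_trans h10 (by linarith)) (abs_nonneg _) (Real.exp_pos _).le
    _ = 4 * Real.exp C * C^2 / n := by ring

/-! ### Basic facts about self-dual cones and positivity-preserving operators -/

namespace SDC
variable {P : Set H}

lemma zero_mem (hP : IsSelfDualCone P) : (0:H) ∈ P := by
  rw [hP.2.2.2]; intro ξ _; simp

lemma add_mem (hP : IsSelfDualCone P) {x y : H} (hx : x ∈ P) (hy : y ∈ P) : x + y ∈ P := by
  have h := hP.2.1 hx hy (by norm_num : (0:ℝ) ≤ 1/2) (by norm_num : (0:ℝ) ≤ 1/2) (by norm_num)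
  have h2 := hP.2.2.1 2 (by norm_num) _ h
  rw [smul_add, smul_smul, smul_smul] at h2
  norm_num at h2
  exact h2

lemma posPres_one : PosPres P (1 : H →L[ℂ] H) := fun _ hx => hx

lemma posPres_zero (hP : IsSelfDualCone P) : PosPres P (0 : H →L[ℂ] H) := fun x _ => by
  simpa using zero_mem hP

lemma PosPres.mul {S T : H →L[ℂ] H} (hS : PosPres P S) (hT : PosPres P T) :
    PosPres P (S * T) := fun x hx => hS _ (hT x hx)

lemma PosPres.pow {T : H →L[ℂ] H} (hT : PosPres P T) (n : ℕ) : PosPres P (T ^ n) := by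
  induction n with
  | zero => simpa [pow_zero] using posPres_one (P := P)
  | succ n ih => rw [pow_succ]; exact PosPres.mul ih hT

lemma PosPres.add (hP : IsSelfDualCone P) {S T : H →L[ℂ] H} (hS : PosPres P S)
    (hT : PosPres P T) : PosPres P (S + T) := fun x hx => add_mem hP (hS x hx) (hT x hx)

lemma PosPres.rsmul (hP : IsSelfDualCone P) {T : H →L[ℂ] H} (hT : PosPres P T) {t : ℝ}
    (ht : 0 ≤ t) : PosPres P (t • T) := fun x hx => by
  have : (t • T) x = t • (T x) := rfl
  rw [this]; exact hP.2.2.1 t ht _ (hT x hx)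

lemma PosPres.sum (hP : IsSelfDualCone P) {ι : Type*} (s : Finset ι) {T : ι → H →L[ℂ] H}
    (hT : ∀ i ∈ s, PosPres P (T i)) : PosPres P (∑ i ∈ s, T i) := by
  classical
  induction s using Finset.induction with
  | empty => simpa using posPres_zero hP
  | insert _ _ hi ih =>
      rw [Finset.sum_insert hi]
      exact PosPres.add hP (hT _ (Finset.mem_insert_self _ _))
        (ih fun i h => hT i (Finset.mem_insert_of_mem h))

lemma isClosed_posPres (hP : IsSelfDualCone P) : IsClosed {T : H →L[ℂ] H | PosPres P T} := by
  have : {T : H →L[ℂ] H | PosPres P T} = ⋂ x ∈ P, (fun T : H →L[ℂ] H => T x) ⁻¹' P := by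
    ext T; simp [PosPres, Set.mem_iInter]
  rw [this]
  refine isClosed_biInter fun x _ => IsClosed.preimage ?_ hP.1
  exact (ContinuousLinearMap.apply ℂ H x).continuous

lemma PosPres.tsum (hP : IsSelfDualCone P) {T : ℕ → H →L[ℂ] H} (hsum : Summable T)
    (hT : ∀ n, PosPres P (T n)) : PosPres P (∑' n, T n) := by
  refine (isClosed_posPres hP).mem_of_tendsto hsum.hasSum (Filter.Eventually.of_forall ?_)
  intro s
  exact PosPres.sum hP _ fun i _ => hT i

end SDC

/-! ### Spectral facts -/

section spectral
variable [CompleteSpace H] [Nontrivial H]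

omit [Nontrivial H] in
lemma specInf_eq (A : H →L[ℂ] H) : specInf A = sInf (spectrum ℝ A) := by
  unfold specInf
  congr 1

lemma spec_nonempty {A : H →L[ℂ] H} (hA : IsSelfAdjoint A) : (spectrum ℝ A).Nonempty :=
  hA.spectrum_nonempty

lemma spec_abs_le {A : H →L[ℂ] H} {x : ℝ} (hx : x ∈ spectrum ℝ A) : |x| ≤ ‖A‖ := by
  simpa [Real.norm_eq_abs] using spectrum.norm_le_norm_of_mem hx

lemma spec_bddBelow (A : H →L[ℂ] H) : BddBelow (spectrum ℝ A) :=
  ⟨-‖A‖, fun _ hx => neg_le_of_abs_le (spec_abs_le hx)⟩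

lemma specInf_le {A : H →L[ℂ] H} {x : ℝ} (hx : x ∈ spectrum ℝ A) : specInf A ≤ x := by
  rw [specInf_eq]; exact csInf_le (spec_bddBelow A) hx

lemma neg_specInf_le {A : H →L[ℂ] H} (hA : IsSelfAdjoint A) : -specInf A ≤ ‖A‖ := by
  rw [specInf_eq, neg_le]
  exact le_csInf (spec_nonempty hA) fun x hx => (abs_le.1 (spec_abs_le hx)).1

lemma exp_eq_cfc {A : H →L[ℂ] H} (hA : IsSelfAdjoint A) (r : ℝ) :
    NormedSpace.exp (-(r : ℂ) • A) = cfc (fun x : ℝ => Real.exp (-(r * x))) A := by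
  have h1 : -(r : ℂ) • A = cfc (fun x : ℝ => -r * x) A := by
    rw [cfc_const_mul_id (-r) A hA, ← Complex.coe_smul (-r) A, Complex.ofReal_neg]
  have hsa : IsSelfAdjoint (cfc (fun x : ℝ => -r * x) A) := cfc_predicate _ A
  calc NormedSpace.exp (-(r : ℂ) • A)
      = NormedSpace.exp (cfc (fun x : ℝ => -r * x) A) := by rw [h1]
    _ = NormedSpace.exp (cfc (fun x : ℝ => -r * x) A) := rfl
    _ = cfc Real.exp (cfc (fun x : ℝ => -r * x) A) :=
        (CFC.real_exp_eq_normedSpace_exp hsa).symm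
    _ = cfc (Real.exp ∘ fun x : ℝ => -r * x) A :=
        (cfc_comp Real.exp (fun x : ℝ => -r * x) A hA (by fun_prop) (by fun_prop)).symm
    _ = cfc (fun x : ℝ => Real.exp (-(r * x))) A :=
        cfc_congr fun x _ => by simp [Function.comp, neg_mul]

omit [Nontrivial H] in
lemma add_smul_one_eq_cfc {A : H →L[ℂ] H} (hA : IsSelfAdjoint A) (s : ℝ) :
    A + (s : ℂ) • 1 = cfc (fun x : ℝ => x + s) A := by
  have h := cfc_add_const (R := ℝ) s (fun x => x) A (by fun_prop) hA
  rw [cfc_id' ℝ A] at h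
  rw [h, Algebra.algebraMap_eq_smul_one]
  congr 1

lemma isUnit_and_inverse {A : H →L[ℂ] H} (hA : IsSelfAdjoint A) {s : ℝ}
    (hs : -specInf A < s) :
    IsUnit (A + (s : ℂ) • 1) ∧
      Ring.inverse (A + (s : ℂ) • 1) = cfc (fun x : ℝ => (x + s)⁻¹) A := by
  have hpos : ∀ x ∈ spectrum ℝ A, 0 < x + s := fun x hx => by
    have := specInf_le hx; linarith
  have hcont : ContinuousOn (fun x : ℝ => (x + s)⁻¹) (spectrum ℝ A) :=
    ContinuousOn.inv₀ (by fun_prop) fun x hx => ne_of_gt (hpos x hx)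
  have h2 : cfc (fun x : ℝ => x + s) A * cfc (fun x : ℝ => (x + s)⁻¹) A = 1 := by
    rw [← cfc_mul _ _ A (by fun_prop) hcont,
      cfc_congr (g := fun _ : ℝ => (1:ℝ)) fun x hx => by
        field_simp [ne_of_gt (hpos x hx)]]
    exact cfc_const_one ℝ A
  have h3 : cfc (fun x : ℝ => (x + s)⁻¹) A * cfc (fun x : ℝ => x + s) A = 1 := by
    rw [← cfc_mul _ _ A hcont (by fun_prop),
      cfc_congr (g := fun _ : ℝ => (1:ℝ)) fun x hx => by
        field_simp [ne_of_gt (hpos x hx)]]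
    exact cfc_const_one ℝ A
  rw [add_smul_one_eq_cfc hA s]
  set u : (H →L[ℂ] H)ˣ :=
    ⟨cfc (fun x : ℝ => x + s) A, cfc (fun x : ℝ => (x + s)⁻¹) A, h2, h3⟩ with hu
  exact ⟨⟨u, rfl⟩, by rw [show cfc (fun x : ℝ => x + s) A = (u : H →L[ℂ] H) from rfl,
    Ring.inverse_unit]; rfl⟩

omit [Nontrivial H] in
lemma norm_cfc_diff_le {A : H →L[ℂ] H} {f g : ℝ → ℝ} {c : ℝ}
    (hc : 0 ≤ c) (hf : ContinuousOn f (spectrum ℝ A)) (hg : ContinuousOn g (spectrum ℝ A))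
    (h : ∀ x ∈ spectrum ℝ A, |f x - g x| ≤ c) : ‖cfc f A - cfc g A‖ ≤ c := by
  rw [← cfc_sub f g A hf hg]
  exact norm_cfc_le hc fun x hx => by simpa [Real.norm_eq_abs] using h x hx

end spectral

/-! ### The two main implications -/

section main
variable [CompleteSpace H] [Nontrivial H]

lemma posPres_resolvent {P : Set H} (hP : IsSelfDualCone P) {A : H →L[ℂ] H}
    (hA : IsSelfAdjoint A)
    (hexp : ∀ β : ℝ, 0 ≤ β → PosPres P (NormedSpace.exp (-(β : ℂ) • A)))
    {s : ℝ} (hs : -specInf A < s) :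
    PosPres P (cfc (fun x : ℝ => (x + s)⁻¹) A) := by
  have hpos : ∀ x ∈ spectrum ℝ A, 0 < x + s := fun x hx => by
    have := specInf_le hx; linarith
  have hc0 : 0 < specInf A + s := by linarith
  set M : ℝ := ‖A‖ + |s| + 1 with hM
  have hM0 : 0 < M := by positivity
  have hxM : ∀ x ∈ spectrum ℝ A, x + s ≤ M := fun x hx => by
    have h1 := abs_le.1 (spec_abs_le hx)
    have h2 := le_abs_self s
    rw [hM]; linarith [h1.2]
  have hfc : ContinuousOn (fun x : ℝ => (x + s)⁻¹) (spectrum ℝ A) :=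
    ContinuousOn.inv₀ (by fun_prop) fun x hx => ne_of_gt (hpos x hx)
  have hmem : cfc (fun x : ℝ => (x + s)⁻¹) A ∈ closure {T : H →L[ℂ] H | PosPres P T} := by
    rw [Metric.mem_closure_iff]
    intro ε hε
    set t : ℝ := min (1/M) (ε/6) with ht_def
    have ht0 : 0 < t := lt_min (by positivity) (by positivity)
    set h : ℝ → ℝ := fun x => Real.exp (-(t*(x+s))) with hh
    have hhc : ContinuousOn h (spectrum ℝ A) := by rw [hh]; fun_prop
    set G : H →L[ℂ] H := cfc h A with hG
    have hGpos : PosPres P G := by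
      have e1 : G = Real.exp (-(t*s)) •
          cfc (fun x : ℝ => Real.exp (-(t*x))) A := by
        rw [hG, ← cfc_const_mul (Real.exp (-(t*s)))
          (fun x : ℝ => Real.exp (-(t*x))) A (by fun_prop)]
        exact cfc_congr fun x _ => by rw [hh, ← Real.exp_add]; ring_nf
      rw [e1]
      have h2 := hexp t ht0.le
      rw [exp_eq_cfc hA t] at h2
      exact SDC.PosPres.rsmul hP h2 (Real.exp_pos _).le
    have hGnorm : ‖G‖ < 1 := by
      have hb : ∀ x ∈ spectrum ℝ A,
          ‖h x‖ ≤ Real.exp (-(t*(specInf A + s))) := fun x hx => by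
        rw [hh, Real.norm_eq_abs, abs_of_pos (Real.exp_pos _)]
        apply Real.exp_le_exp.2
        have := specInf_le hx
        nlinarith
      refine lt_of_le_of_lt (norm_cfc_le (Real.exp_pos _).le hb) ?_
      rw [Real.exp_lt_one_iff]
      nlinarith
    have hsummable : Summable (fun k : ℕ => G ^ k) :=
      summable_geometric_of_norm_lt_one hGnorm
    have hSpos : PosPres P (∑' k : ℕ, G ^ k) :=
      SDC.PosPres.tsum hP hsummable fun k => SDC.PosPres.pow hGpos k
    have hdpos : ∀ x ∈ spectrum ℝ A, 0 < 1 - h x := fun x hx => by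
      have h1 : h x < 1 := by
        rw [hh]; exact Real.exp_lt_one_iff.2 (by nlinarith [hpos x hx])
      linarith
    have hinvc : ContinuousOn (fun x : ℝ => (1 - h x)⁻¹) (spectrum ℝ A) :=
      ContinuousOn.inv₀ (continuousOn_const.sub hhc) fun x hx => ne_of_gt (hdpos x hx)
    have hone : (1 : H →L[ℂ] H) - G = cfc (fun x : ℝ => 1 - h x) A := by
      rw [cfc_sub (fun _ : ℝ => (1:ℝ)) h A (by fun_prop) hhc, cfc_const_one ℝ A, hG]
    have hmul1 : ((1 : H →L[ℂ] H) - G) * cfc (fun x : ℝ => (1 - h x)⁻¹) A = 1 := by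
      rw [hone, ← cfc_mul (fun x : ℝ => 1 - h x) _ A (continuousOn_const.sub hhc) hinvc,
        cfc_congr (g := fun _ : ℝ => (1:ℝ)) fun x hx => by
          field_simp [ne_of_gt (hdpos x hx)]]
      exact cfc_const_one ℝ A
    have hmul2 : cfc (fun x : ℝ => (1 - h x)⁻¹) A * ((1 : H →L[ℂ] H) - G) = 1 := by
      rw [hone, ← cfc_mul _ (fun x : ℝ => 1 - h x) A hinvc (continuousOn_const.sub hhc),
        cfc_congr (g := fun _ : ℝ => (1:ℝ)) fun x hx => by
          field_simp [ne_of_gt (hdpos x hx)]]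
      exact cfc_const_one ℝ A
    have hsum_eq : (∑' k : ℕ, G ^ k) = cfc (fun x : ℝ => (1 - h x)⁻¹) A := by
      rw [geom_series_eq_inverse G hGnorm]
      set u : (H →L[ℂ] H)ˣ :=
        ⟨1 - G, cfc (fun x : ℝ => (1 - h x)⁻¹) A, hmul1, hmul2⟩ with hu
      rw [show (1 : H →L[ℂ] H) - G = (u : H →L[ℂ] H) from rfl, Ring.inverse_unit]
      rfl
    refine ⟨t • (∑' k : ℕ, G ^ k), SDC.PosPres.rsmul hP hSpos ht0.le, ?_⟩
    rw [dist_eq_norm, hsum_eq, ← cfc_const_mul t (fun x : ℝ => (1 - h x)⁻¹) A hinvc]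
    have hb : ∀ x ∈ spectrum ℝ A, |(x+s)⁻¹ - t * (1 - h x)⁻¹| ≤ 3 * t := fun x hx => by
      have ht1 : t * (x + s) ≤ 1 := by
        have h1 : t ≤ 1/M := min_le_left _ _
        calc t * (x+s) ≤ (1/M) * M :=
              mul_le_mul h1 (hxM x hx) (hpos x hx).le (by positivity)
          _ = 1 := by field_simp
      have h9 := real_est_resolvent ht0 (hpos x hx) ht1
      rw [abs_sub_comm]
      simpa [hh] using h9
    refine lt_of_le_of_lt
      (norm_cfc_diff_le (by positivity) hfc (continuousOn_const.mul hinvc) hb) ?_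
    have h1 : t ≤ ε/6 := min_le_right _ _
    linarith
  rwa [(SDC.isClosed_posPres hP).closure_eq] at hmem

lemma posPres_exp {P : Set H} (hP : IsSelfDualCone P) {A : H →L[ℂ] H} (hA : IsSelfAdjoint A)
    (hres : ∀ s : ℝ, -specInf A < s → PosPres P (cfc (fun x : ℝ => (x + s)⁻¹) A))
    {β : ℝ} (hβ : 0 < β) :
    PosPres P (cfc (fun x : ℝ => Real.exp (-(β * x))) A) := by
  set C : ℝ := β * (‖A‖ + 1) with hC_def
  have hC0 : 0 < C := by positivity
  have hfc : ContinuousOn (fun x : ℝ => Real.exp (-(β * x))) (spectrum ℝ A) := by fun_prop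
  have hmem : cfc (fun x : ℝ => Real.exp (-(β * x))) A ∈
      closure {T : H →L[ℂ] H | PosPres P T} := by
    rw [Metric.mem_closure_iff]
    intro ε hε
    obtain ⟨n, hn⟩ := exists_nat_gt
      (max (max (β * ‖A‖) (2*C)) (max (2*C^2) (8 * Real.exp C * C^2 / ε)))
    have h1 : β * ‖A‖ < (n:ℝ) := (((le_max_left _ _).trans (le_max_left _ _))).trans_lt hn
    have h2 : 2*C < (n:ℝ) := (((le_max_right _ _).trans (le_max_left _ _))).trans_lt hn
    have h3 : 2*C^2 < (n:ℝ) := (((le_max_left _ _).trans (le_max_right _ _))).trans_lt hn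
    have h4 : 8 * Real.exp C * C^2 / ε < (n:ℝ) :=
      (((le_max_right _ _).trans (le_max_right _ _))).trans_lt hn
    have hnR : (0:ℝ) < n := lt_trans (by positivity) h2
    have hn0 : 0 < n := by exact_mod_cast hnR
    have hCn : C / n ≤ 1/2 := by
      rw [div_le_iff₀ hnR]; linarith
    have hn2' : 2*C^2 / n ≤ 1 := by
      rw [div_le_one hnR]; linarith
    set s : ℝ := n / β with hs_def
    have hs0 : 0 < s := by positivity
    have hsE : -specInf A < s := by
      refine lt_of_le_of_lt (neg_specInf_le hA) ?_
      rw [hs_def, lt_div_iff₀ hβ]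
      calc ‖A‖ * β = β * ‖A‖ := by ring
        _ < n := h1
    have hpos : ∀ x ∈ spectrum ℝ A, 0 < x + s := fun x hx => by
      have := specInf_le hx; linarith
    have hinvc : ContinuousOn (fun x : ℝ => (x + s)⁻¹) (spectrum ℝ A) :=
      ContinuousOn.inv₀ (by fun_prop) fun x hx => ne_of_gt (hpos x hx)
    have hTpos : PosPres P (cfc (fun x : ℝ => (s * (x + s)⁻¹)^n) A) := by
      rw [cfc_pow (fun x : ℝ => s * (x + s)⁻¹) n A (continuousOn_const.mul hinvc),
        cfc_const_mul s _ A hinvc]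
      exact SDC.PosPres.pow (SDC.PosPres.rsmul hP (hres s hsE) hs0.le) n
    refine ⟨_, hTpos, ?_⟩
    rw [dist_eq_norm]
    have hb : ∀ x ∈ spectrum ℝ A,
        |Real.exp (-(β * x)) - (s * (x + s)⁻¹)^n| ≤ 4 * Real.exp C * C^2 / n := by
      intro x hx
      have hxa := abs_le.1 (spec_abs_le hx)
      have hCx : |β * x| ≤ C := by
        rw [abs_mul, abs_of_pos hβ, hC_def]
        have hx1 : |x| ≤ ‖A‖ + 1 := by have := spec_abs_le hx; linarith
        exact mul_le_mul_of_nonneg_left hx1 hβ.le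
      have hup : (0:ℝ) < 1 + β * x / n := by
        have hd : |β * x / n| ≤ C / n := by
          rw [abs_div, abs_of_nonneg hnR.le]; gcongr
        have := abs_le.1 (hd.trans hCn); linarith
      have hqeq : (s * (x + s)⁻¹)^n =
          Real.exp (-((n:ℝ) * Real.log (1 + β * x / n))) := by
        have hxs : x + s ≠ 0 := (hpos x hx).ne'
        have hse : s * (x + s)⁻¹ = (1 + β * x / n)⁻¹ := by
          have key : s * (x + s)⁻¹ * (1 + β * x / n) = 1 := by
            have hnx : (n:ℝ) + β * x ≠ 0 := by
              have hb2 : (n:ℝ) + β * x = β * (x + s) := by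
                rw [hs_def]; field_simp; ring
              rw [hb2]
              exact mul_ne_zero hβ.ne' hxs
            rw [hs_def]
            rw [hs_def] at hxs
            field_simp
            have hnx' : (x * β + (n:ℝ)) * n ≠ 0 := by
              apply mul_ne_zero _ hnR.ne'
              rw [mul_comm, add_comm]
              exact hnx
            rw [div_eq_one_iff_eq (by rw [add_comm]; exact hnx)]
            ring
          exact eq_inv_of_mul_eq_one_left key
        have hL : (1 + β * x / n)⁻¹ = Real.exp (-Real.log (1 + β * x / n)) := by
          rw [Real.exp_neg, Real.exp_log hup]
        rw [hse, hL, ← Real.exp_nat_mul]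
        congr 1
        ring
      rw [hqeq]
      exact real_est_exp hCx hC0 hCn hn2' hn0
    refine lt_of_le_of_lt
      (norm_cfc_diff_le (by positivity) hfc ((continuousOn_const.mul hinvc).pow n) hb) ?_
    rw [div_lt_iff₀ hnR]
    rw [div_lt_iff₀ hε] at h4
    have hpos' : (0:ℝ) ≤ Real.exp C * C^2 := by positivity
    nlinarith
  rwa [(SDC.isClosed_posPres hP).closure_eq] at hmem

end main

/-- Proposition A.1: for a bounded self-adjoint operator `A`, `e^{-βA} ⊵ 0` w.r.t. `P`
for all `β ≥ 0` iff `(A + s)⁻¹` exists and `(A + s)⁻¹ ⊵ 0` w.r.t. `P` for all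
`s > -E(A)`. -/
theorem exp_posPres_iff_resolvent_posPres [CompleteSpace H] [Nontrivial H]
    (P : Set H) (hP : IsSelfDualCone P) (A : H →L[ℂ] H) (hA : IsSelfAdjoint A) :
    (∀ β : ℝ, 0 ≤ β → PosPres P (NormedSpace.exp (-(β : ℂ) • A))) ↔
    (∀ s : ℝ, -specInf A < s →
      IsUnit (A + (s : ℂ) • 1) ∧ PosPres P (Ring.inverse (A + (s : ℂ) • 1))) := by
  constructor
  · intro hexp s hs
    obtain ⟨hu, hinv⟩ := isUnit_and_inverse hA hs
    refine ⟨hu, ?_⟩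
    rw [hinv]
    exact posPres_resolvent hP hA hexp hs
  · intro hres β hβ
    rcases eq_or_lt_of_le hβ with h0 | h0
    · rw [← h0]
      simp only [Complex.ofReal_zero, neg_zero, zero_smul, NormedSpace.exp_zero]
      exact SDC.posPres_one
    · rw [exp_eq_cfc hA β]
      refine posPres_exp hP hA (fun s hs => ?_) h0
      obtain ⟨hu, hinv⟩ := isUnit_and_inverse hA hs
      have h5 := (hres s hs).2
      rwa [hinv] at h5
end
end

section
/- Let A be a bounded self-adjoint operator on a nontrivial complex Hilbert space ℌ equipped with a self-dual cone 𝔓. Assume that e^{−βA} ⊵ 0 w.r.t. 𝔓 for all β ≥ 0 and that E(A), the infimum of the spectrum of A, is an eigenvalue of A. Then there exists a nonzero vector ξ ∈ ker(A − E(A)) with ξ ∈ 𝔓. -/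
open scoped ComplexOrder Pointwise

set_option synthInstance.maxHeartbeats 400000
set_option maxHeartbeats 1000000

noncomputable section

variable {H : Type*} [NormedAddCommGroup H] [InnerProductSpace ℂ H]

section AuxExp

variable [CompleteSpace H]

private lemma aux_hasDerivAt (x : H →L[ℂ] H) (v : H) (t : ℝ) :
    HasDerivAt (fun s : ℝ => NormedSpace.exp (s • x) v)
      (NormedSpace.exp (t • x) (x v)) t := by
  have h := hasDerivAt_exp_smul_const (𝕂 := ℝ) (𝔸 := H →L[ℂ] H) x t
  have h2 := (((ContinuousLinearMap.apply ℂ H v).restrictScalars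
      ℝ).hasFDerivAt.comp_hasDerivAt t h)
  simpa [Function.comp_def, ContinuousLinearMap.mul_apply] using h2

private lemma aux_exp_fixed_of_ker {x : H →L[ℂ] H} {v : H} (hxv : x v = 0) (t : ℝ) :
    NormedSpace.exp (t • x) v = v := by
  have hder : ∀ s : ℝ, HasDerivAt (fun s : ℝ => NormedSpace.exp (s • x) v) 0 s := fun s => by
    simpa [hxv] using aux_hasDerivAt x v s
  have hconst := is_const_of_deriv_eq_zero (f := fun s : ℝ => NormedSpace.exp (s • x) v)
    (fun s => (hder s).differentiableAt) (fun s => (hder s).deriv) t 0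
  simpa [NormedSpace.exp_zero] using hconst

private lemma aux_ker_of_exp_fixed {x : H →L[ℂ] H} {v : H}
    (hfix : ∀ t : ℝ, 0 ≤ t → NormedSpace.exp (t • x) v = v) : x v = 0 := by
  have h1 := aux_hasDerivAt x v 1
  have h2 : (fun s : ℝ => NormedSpace.exp (s • x) v) =ᶠ[nhds (1 : ℝ)] fun _ => v := by
    filter_upwards [Ioi_mem_nhds (zero_lt_one (α := ℝ))] with s hs using hfix s hs.le
  have h3 : NormedSpace.exp ((1 : ℝ) • x) (x v) = 0 := by
    have h4 := (h2.hasDerivAt_iff).mp h1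
    exact h4.unique (hasDerivAt_const 1 v)
  have h5 : (NormedSpace.exp (-((1 : ℝ) • x)) * NormedSpace.exp ((1 : ℝ) • x)) (x v) = 0 := by
    rw [ContinuousLinearMap.mul_apply, h3, map_zero]
  letI : NormedAlgebra ℚ (H →L[ℂ] H) := NormedAlgebra.restrictScalars ℚ ℂ (H →L[ℂ] H)
  rwa [← NormedSpace.exp_add_of_commute (Commute.refl ((1 : ℝ) • x)).neg_left, neg_add_cancel,
    NormedSpace.exp_zero, ContinuousLinearMap.one_apply] at h5

end AuxExp

/-- Proposition A.3 (existence of a positive ground state): if `e^{-βA} ⊵ 0` w.r.t. `P`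
for all `β ≥ 0` and `E(A)` is an eigenvalue of `A`, then `ker (A - E(A))` contains a
nonzero vector belonging to `P`. -/
theorem exists_positive_ground_state [CompleteSpace H] [Nontrivial H]
    (P : Set H) (hP : IsSelfDualCone P) (A : H →L[ℂ] H) (hA : IsSelfAdjoint A)
    (hexp : ∀ β : ℝ, 0 ≤ β → PosPres P (NormedSpace.exp (-(β : ℂ) • A)))
    (heig : LinearMap.ker ((A - ((specInf A : ℂ)) • 1 : H →L[ℂ] H) : H →ₗ[ℂ] H) ≠ ⊥) :
    ∃ ξ ∈ LinearMap.ker ((A - ((specInf A : ℂ)) • 1 : H →L[ℂ] H) : H →ₗ[ℂ] H), ξ ≠ 0 ∧ ξ ∈ P := by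
  classical
  set E : ℝ := specInf A with hE
  set C : H →L[ℂ] H := A - ((E : ℂ)) • 1 with hCdef
  obtain ⟨hPc, hPconv, hPsmul, hPdual⟩ := hP
  -- `C` is selfadjoint
  have h1sa : IsSelfAdjoint (((E : ℂ)) • (1 : H →L[ℂ] H)) := by
    simp [IsSelfAdjoint, star_smul, Complex.star_def, Complex.conj_ofReal]
  have hC_sa : IsSelfAdjoint C := hA.sub h1sa
  -- the real spectrum points of `A` are bounded below
  have hbdd : BddBelow {t : ℝ | (t : ℂ) ∈ spectrum ℂ A} := by
    refine ⟨-‖A‖, fun t ht => ?_⟩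
    have h := spectrum.norm_le_norm_of_mem (𝕜 := ℂ) ht
    rw [Complex.norm_real, Real.norm_eq_abs] at h
    exact neg_le_of_abs_le h
  -- the spectrum of `C` is nonnegative
  have hspecC : ∀ y ∈ spectrum ℝ C, (0 : ℝ) ≤ y := by
    intro y hy
    have hy2 : (y : ℂ) ∈ spectrum ℂ A - {((E : ℂ))} := by
      rw [spectrum.sub_singleton_eq]
      have h := (spectrum.algebraMap_mem_iff ℂ).mpr hy
      simpa [hCdef, Algebra.algebraMap_eq_smul_one] using h
    obtain ⟨z, hz, w, hw, hzw⟩ := Set.mem_sub.mp hy2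
    rw [Set.mem_singleton_iff] at hw
    subst hw
    have hz' : ((y + E : ℝ) : ℂ) = z := by push_cast; rw [← hzw]; ring
    have hmem : (y + E) ∈ {t : ℝ | (t : ℂ) ∈ spectrum ℂ A} := by
      show ((y + E : ℝ) : ℂ) ∈ spectrum ℂ A
      rw [hz']; exact hz
    have h3 : E ≤ y + E := csInf_le hbdd hmem
    linarith
  -- contraction property
  have hcontr : ∀ β : ℝ, 0 ≤ β → ‖NormedSpace.exp (β • (-C))‖ ≤ 1 := by
    intro β hβ
    have hsa : IsSelfAdjoint ((-β) • C) := IsSelfAdjoint.smul (star_trivial _) hC_sa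
    have h0 : β • (-C) = (-β) • C := by rw [smul_neg, ← neg_smul]
    have h1 : NormedSpace.exp (β • (-C)) = cfc (fun y : ℝ => Real.exp ((-β) • y)) C := by
      rw [h0, ← CFC.real_exp_eq_normedSpace_exp hsa,
        ← cfc_comp_smul (-β) Real.exp C (by fun_prop) hC_sa]
    rw [h1]
    refine norm_cfc_le zero_le_one fun y hy => ?_
    have h2 := hspecC y hy
    rw [Real.norm_eq_abs, Real.abs_exp]
    refine Real.exp_le_one_iff.mpr ?_
    simp only [smul_eq_mul]
    nlinarith
  -- the semigroup preserves the cone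
  have hTP : ∀ β : ℝ, 0 ≤ β → ∀ ζ ∈ P, NormedSpace.exp (β • (-C)) ζ ∈ P := by
    intro β hβ ζ hζ
    have hsum : β • (-C) = (-(β : ℂ)) • A + ((β * E : ℝ) : ℂ) • (1 : H →L[ℂ] H) := by
      have h1 : β • (-C) = ((β : ℝ) : ℂ) • (-C) := (algebraMap_smul ℂ β (-C)).symm
      rw [h1, hCdef]
      push_cast
      module
    have hcomm : Commute ((-(β : ℂ)) • A) (((β * E : ℝ) : ℂ) • (1 : H →L[ℂ] H)) :=
      (Commute.one_right _).smul_right _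
    have hexp_eq : NormedSpace.exp (β • (-C))
        = NormedSpace.exp (-(β : ℂ) • A)
          * NormedSpace.exp (((β * E : ℝ) : ℂ) • (1 : H →L[ℂ] H)) := by
      have hRC : NormedSpace.exp (β • (-C)) = NormedSpace.exp (β • (-C)) :=
        rfl
      letI : NormedAlgebra ℚ (H →L[ℂ] H) := NormedAlgebra.restrictScalars ℚ ℂ (H →L[ℂ] H)
      rw [hRC, hsum, NormedSpace.exp_add_of_commute hcomm]
    have hscal : NormedSpace.exp (((β * E : ℝ) : ℂ) • (1 : H →L[ℂ] H)) ζ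
        = Real.exp (β * E) • ζ := by
      rw [← Algebra.algebraMap_eq_smul_one, ← NormedSpace.algebraMap_exp_comm,
        Algebra.algebraMap_eq_smul_one, ContinuousLinearMap.smul_apply,
        ContinuousLinearMap.one_apply, ← Complex.exp_eq_exp_ℂ, ← Complex.ofReal_exp]
      rw [show ((Real.exp (β * E) : ℝ) : ℂ) = algebraMap ℝ ℂ (Real.exp (β * E)) from rfl]
      exact algebraMap_smul ℂ _ ζ
    rw [hexp_eq, ContinuousLinearMap.mul_apply, hscal]
    exact hexp β hβ _ (hPsmul _ (Real.exp_nonneg _) ζ hζ)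
  -- eigenvector
  obtain ⟨ξ0, hξ0mem, hξ0ne⟩ := Submodule.exists_mem_ne_zero_of_ne_bot heig
  have hCξ0 : C ξ0 = 0 := LinearMap.mem_ker.mp hξ0mem
  -- basic facts about P
  have h0P : (0 : H) ∈ P := by
    rw [hPdual]
    intro ζ hζ
    simp
  have hdual_mem : ∀ {η : H}, (∀ ζ ∈ P, 0 ≤ (inner ℂ η ζ : ℂ)) → η ∈ P := by
    intro η h
    rw [hPdual]; exact h
  -- a cone element not orthogonal to ξ0
  have hζ0ex : ∃ ζ ∈ P, (inner ℂ ξ0 ζ : ℂ) ≠ 0 := by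
    by_contra h
    push_neg at h
    have hmem : ξ0 ∈ P := hdual_mem fun ζ hζ => by rw [h ζ hζ]
    exact hξ0ne (inner_self_eq_zero.mp (h ξ0 hmem))
  obtain ⟨ζ0, hζ0P, hcne⟩ := hζ0ex
  set ξ : H := (inner ℂ ξ0 ζ0 : ℂ) • ξ0 with hξdef
  have hCξ : C ξ = 0 := by rw [hξdef, map_smul, hCξ0, smul_zero]
  have hξne : ξ ≠ 0 := smul_ne_zero hcne hξ0ne
  have hreξζ0 : 0 < Complex.re (inner ℂ ξ ζ0 : ℂ) := by
    rw [hξdef, inner_smul_left, Complex.conj_mul']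
    simp only [← Complex.ofReal_pow, Complex.ofReal_re]
    exact pow_pos (norm_pos_iff.mpr hcne) 2
  -- projection of ξ onto P
  letI instR : InnerProductSpace ℝ H := InnerProductSpace.rclikeToReal ℂ H
  have hreal : ∀ x y : H, (inner ℝ x y : ℝ) = Complex.re (inner ℂ x y : ℂ) := fun x y => rfl
  obtain ⟨η, hηP, hηmin⟩ :=
    exists_norm_eq_iInf_of_complete_convex ⟨0, h0P⟩ (hPc.isComplete) hPconv ξ
  have hchar := (norm_eq_iInf_iff_real_inner_le_zero hPconv hηP).mp hηmin
  have hηne : η ≠ 0 := by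
    intro h0
    have h := hchar ζ0 hζ0P
    rw [h0, sub_zero, sub_zero, hreal] at h
    linarith
  -- the semigroup fixes η
  have hfix : ∀ β : ℝ, 0 ≤ β → NormedSpace.exp (β • (-C)) η = η := by
    intro β hβ
    set T := NormedSpace.exp (β • (-C)) with hT
    have hTξ : T ξ = ξ := aux_exp_fixed_of_ker (by simp [hCξ]) β
    have hTηP : T η ∈ P := hTP β hβ η hηP
    have hc1 : ‖ξ - T η‖ ≤ ‖ξ - η‖ := by
      have h' : ξ - T η = T (ξ - η) := by rw [map_sub, hTξ]
      rw [h']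
      calc ‖T (ξ - η)‖ ≤ ‖T‖ * ‖ξ - η‖ := T.le_opNorm _
        _ ≤ 1 * ‖ξ - η‖ := mul_le_mul_of_nonneg_right (hcontr β hβ) (norm_nonneg _)
        _ = ‖ξ - η‖ := one_mul _
    have hbdd' : BddBelow (Set.range fun w : P => ‖ξ - (w : H)‖) := by
      refine ⟨0, ?_⟩
      rintro _ ⟨w, rfl⟩
      exact norm_nonneg _
    have hge : (⨅ w : P, ‖ξ - (w : H)‖) ≤ ‖ξ - T η‖ := ciInf_le hbdd' ⟨T η, hTηP⟩
    have heq2 : ‖ξ - T η‖ = ⨅ w : P, ‖ξ - (w : H)‖ :=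
      le_antisymm (hc1.trans (le_of_eq hηmin)) hge
    have hchar2 := (norm_eq_iInf_iff_real_inner_le_zero hPconv hTηP).mp heq2
    have k1 := hchar (T η) hTηP
    have k2 := hchar2 η hηP
    have key : (inner ℝ (T η - η) (T η - η) : ℝ) ≤ 0 := by
      have e1 : (inner ℝ (T η - η) (T η - η) : ℝ)
          = (inner ℝ (ξ - η) (T η - η) : ℝ) - (inner ℝ (ξ - T η) (T η - η) : ℝ) := by
        rw [← inner_sub_left]
        congr 1
        abel
      have e2 : (inner ℝ (ξ - T η) (T η - η) : ℝ) = -(inner ℝ (ξ - T η) (η - T η) : ℝ) := by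
        rw [← inner_neg_right]
        congr 1
        abel
      rw [e1, e2]
      linarith
    have hTη : T η - η = 0 := real_inner_self_nonpos.mp key
    exact sub_eq_zero.mp hTη
  -- conclude
  have hCη : C η = 0 := by
    have h := aux_ker_of_exp_fixed (x := -C) (v := η) hfix
    simpa using h
  exact ⟨η, LinearMap.mem_ker.mpr hCη, hηne, hηP⟩
end
end

section
/- Let A be a bounded self-adjoint operator on a nontrivial complex Hilbert space ℌ equipped with a self-dual cone 𝔓, and let E(A) be the infimum of the spectrum of A. If e^{−βA} ⊳ 0 w.r.t. 𝔓 for all β > 0, then for every real s > −E(A), the operator A + s·1 is invertible and (A + s·1)^{−1} ⊳ 0 w.r.t. 𝔓. -/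
open scoped ComplexOrder

noncomputable section

variable {H : Type*} [NormedAddCommGroup H] [InnerProductSpace ℂ H]

set_option maxHeartbeats 2000000 in
set_option synthInstance.maxHeartbeats 200000 in
open NormedSpace Filter MeasureTheory in
/-- Proposition A.6: if `e^{-βA} ⊳ 0` w.r.t. `P` for all `β > 0`, then for all
`s > -E(A)` the operator `A + s` is invertible and `(A + s)⁻¹ ⊳ 0` w.r.t. `P`. -/
theorem exp_posImp_resolvent_posImp [CompleteSpace H] [Nontrivial H]
    (P : Set H) (hP : IsSelfDualCone P) (A : H →L[ℂ] H) (hA : IsSelfAdjoint A)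
    (hexp : ∀ β : ℝ, 0 < β → PosImp P (NormedSpace.exp (-(β : ℂ) • A))) :
    ∀ s : ℝ, -specInf A < s →
      IsUnit (A + (s : ℂ) • 1) ∧ PosImp P (Ring.inverse (A + (s : ℂ) • 1)) := by
  obtain ⟨hPc, hPconv, hPsmul, hPdual⟩ := hP
  intro s hs
  set B : H →L[ℂ] H := A + (s : ℂ) • 1 with hBdef
  have hB : IsSelfAdjoint B := by
    refine hA.add ?_
    rw [IsSelfAdjoint, star_smul, star_one, Complex.star_def, Complex.conj_ofReal]
  have hspecA : {t : ℝ | (t : ℂ) ∈ spectrum ℂ A} = spectrum ℝ A := by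
    ext t
    rw [Set.mem_setOf_eq, ← Complex.coe_algebraMap]
    exact spectrum.algebraMap_mem_iff ℂ
  have hbdd : BddBelow (spectrum ℝ A) := by
    refine ⟨-‖A‖, fun t ht => ?_⟩
    have h1 := spectrum.norm_le_norm_of_mem ht
    rw [Real.norm_eq_abs] at h1
    linarith [(abs_le.mp h1).1]
  set ε : ℝ := specInf A + s with hεdef
  have hε : 0 < ε := by rw [hεdef]; linarith
  have halg : ∀ t : ℝ, algebraMap ℝ (H →L[ℂ] H) t = (t : ℂ) • 1 := by
    intro t
    rw [Algebra.algebraMap_eq_smul_one, ← algebraMap_smul ℂ t (1 : H →L[ℂ] H),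
      Complex.coe_algebraMap]
  have hspecB : ∀ x ∈ spectrum ℝ B, ε ≤ x := by
    intro x hx
    have hx' : x - s ∈ spectrum ℝ A := by
      rw [spectrum.mem_iff] at hx ⊢
      intro hcon
      apply hx
      convert hcon using 1
      rw [halg, halg, hBdef]
      push_cast
      module
    have h1 : specInf A ≤ x - s := by
      rw [specInf, hspecA]
      exact csInf_le hbdd hx'
    linarith
  have hunit : IsUnit B := by
    by_contra hcon
    have h0 : (0 : ℝ) ∈ spectrum ℝ B := (spectrum.zero_mem_iff ℝ).mpr hcon
    linarith [hspecB 0 h0]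
  refine ⟨hunit, ?_⟩
  -- the semigroup
  set u : ℝ → (H →L[ℂ] H) := fun t => exp (t • (-B)) with hudef
  have hu0 : u 0 = 1 := by
    show exp ((0:ℝ) • (-B)) = 1
    rw [zero_smul, exp_zero]
  have hsmul : ∀ t : ℝ, -(t : ℂ) • B = t • (-B) := by
    intro t
    rw [← algebraMap_smul ℂ t (-B : H →L[ℂ] H), Complex.coe_algebraMap]
    simp
  have huC : ∀ t : ℝ, u t = exp (-(t : ℂ) • B) := by
    intro t
    show exp (t • (-B)) = _
    rw [← hsmul t]
  have hnorm : ∀ t : ℝ, 0 ≤ t → ‖u t‖ ≤ Real.exp (-(t * ε)) := by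
    intro t ht
    have hsa : IsSelfAdjoint (t • (-B)) := by
      rw [← hsmul t, IsSelfAdjoint, star_smul, hB.star_eq, star_neg, Complex.star_def,
        Complex.conj_ofReal]
    show ‖exp (t • (-B))‖ ≤ _
    rw [← CFC.real_exp_eq_normedSpace_exp hsa]
    have h1 : t • (-B) = (-t) • B := by rw [smul_neg, ← neg_smul]
    rw [h1, ← cfc_comp_smul (-t) Real.exp B (by fun_prop) hB]
    refine norm_cfc_le (Real.exp_nonneg _) fun x hx => ?_
    rw [Real.norm_eq_abs, abs_of_pos (Real.exp_pos _), Real.exp_le_exp]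
    have h2 := hspecB x hx
    simp only [smul_eq_mul]
    nlinarith
  have husplit : ∀ t : ℝ, u t = Real.exp (-(t * s)) • exp (-(t : ℂ) • A) := by
    intro t
    rw [huC]
    have h1 : -(t : ℂ) • B = -(t : ℂ) • A + algebraMap ℂ (H →L[ℂ] H) (↑(-(t * s))) := by
      have h2 : ((↑(-(t * s)) : ℂ)) = (-(t : ℂ)) * s := by push_cast; ring
      rw [Algebra.algebraMap_eq_smul_one, h2, hBdef]
      module
    letI : NormedAlgebra ℚ (H →L[ℂ] H) := .restrictScalars ℚ ℂ (H →L[ℂ] H)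
    rw [h1, exp_add_of_commute (Algebra.commute_algebraMap_right _ _), ← algebraMap_exp_comm]
    have h3 : exp ((↑(-(t * s)) : ℂ)) = ((Real.exp (-(t * s)) : ℝ) : ℂ) := by
      rw [← Complex.exp_eq_exp_ℂ, Complex.ofReal_exp]
    rw [h3, Algebra.algebraMap_eq_smul_one, mul_smul_comm, mul_one,
      ← algebraMap_smul ℂ (Real.exp (-(t * s))) (exp (-(t : ℂ) • A)), Complex.coe_algebraMap]
  -- continuity of the semigroup
  have hucont : Continuous u := by
    letI : NormedAlgebra ℚ (H →L[ℂ] H) := .restrictScalars ℚ ℂ (H →L[ℂ] H)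
    exact exp_continuous.comp (continuous_id.smul continuous_const)
  -- positivity of matrix elements of the semigroup
  have hme : ∀ t : ℝ, 0 < t → ∀ ξ ∈ P, ξ ≠ 0 → ∀ η ∈ P, η ≠ 0 →
      0 < (inner ℂ ξ (u t η) : ℂ) := by
    intro t ht ξ hξ hξ0 η hη hη0
    have h1 : u t η = ((Real.exp (-(t * s)) : ℝ) : ℂ) • (exp (-(t : ℂ) • A) η) := by
      rw [husplit t, ContinuousLinearMap.smul_apply, ← Complex.coe_algebraMap]
      exact (algebraMap_smul ℂ _ _).symm
    rw [h1, inner_smul_right]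
    have h2 : (0 : ℂ) < ((Real.exp (-(t * s)) : ℝ) : ℂ) := by
      rw [Complex.zero_lt_real]
      exact Real.exp_pos _
    exact mul_pos h2 ((hexp t ht η hη hη0).2 ξ hξ hξ0)
  -- nonnegativity of matrix elements including t = 0
  have hme0 : ∀ t : ℝ, 0 ≤ t → ∀ ξ ∈ P, ∀ η ∈ P, 0 ≤ (inner ℂ ξ (u t η) : ℂ) := by
    intro t ht ξ hξ η hη
    rcases eq_or_ne ξ 0 with rfl | hξ0
    · simp
    rcases eq_or_ne η 0 with rfl | hη0
    · simp
    rcases ht.eq_or_lt with rfl | ht'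
    · rw [hu0]
      simp only [ContinuousLinearMap.one_apply]
      have := hPdual ▸ hξ
      exact this η hη
    · exact le_of_lt (hme t ht' ξ hξ hξ0 η hη hη0)
  -- the key positivity statement for the inverse
  have key : ∀ η ∈ P, η ≠ 0 → ∀ ξ ∈ P, ξ ≠ 0 →
      0 < (inner ℂ ξ (Ring.inverse B η) : ℂ) := by
    intro η hη hη0 ξ hξ hξ0
    set w : H := Ring.inverse B η with hwdef
    have hBw : B w = η := by
      have h1 : B * Ring.inverse B = 1 := Ring.mul_inverse_cancel B hunit
      calc B w = (B * Ring.inverse B) η := rfl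
        _ = η := by rw [h1]; rfl
    set Φ : (H →L[ℂ] H) →L[ℝ] ℂ :=
      (((innerSL ℂ ξ).comp ((ContinuousLinearMap.apply ℂ H) w)).restrictScalars ℝ) with hΦdef
    have hΦ : ∀ T : H →L[ℂ] H, Φ T = inner ℂ ξ (T w) := fun T => by
      simp [hΦdef]
    set g : ℝ → ℂ := fun t => Φ (u t) with hgdef
    set c : ℝ → ℂ := fun t => inner ℂ ξ (u t η) with hcdef
    have hccont : Continuous c := by
      rw [hcdef]
      exact (innerSL ℂ ξ).continuous.comp
        (((ContinuousLinearMap.apply ℂ H) η).continuous.comp hucont)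
    have hg0 : g 0 = inner ℂ ξ w := by rw [hgdef]; simp [hΦ, hu0]
    have hgderiv : ∀ t : ℝ, HasDerivAt g (-(c t)) t := by
      intro t
      have h1 : HasDerivAt u (u t * (-B)) t := hasDerivAt_exp_smul_const (-B) t
      have h2 := ((Φ.hasFDerivAt (x := u t)).comp t h1.hasFDerivAt).hasDerivAt
      have h3 : Φ (u t * B) = c t := by
        rw [hΦ]
        show (inner ℂ ξ ((u t) (B w)) : ℂ) = c t
        rw [hBw]
      have h4 : HasDerivAt (⇑Φ ∘ u) (-(c t)) t := by simpa [h3] using h2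
      exact h4
    -- fundamental theorem of calculus
    have hFTC : ∀ T : ℝ, g 0 = g T + ∫ τ in (0:ℝ)..T, c τ := by
      intro T
      have h1 := intervalIntegral.integral_eq_sub_of_hasDerivAt
        (f := g) (f' := fun τ => -(c τ)) (fun τ _ => hgderiv τ)
        ((hccont.neg).intervalIntegrable 0 T)
      rw [intervalIntegral.integral_neg] at h1
      have h2 : -(∫ τ in (0:ℝ)..T, c τ) = g T - g 0 := h1
      linear_combination h2
    -- the integrals converge to g 0
    have hgn : Tendsto (fun n : ℕ => g n) atTop (nhds 0) := by
      have hb : ∀ n : ℕ, ‖g n‖ ≤ ‖ξ‖ * ‖w‖ * Real.exp (-((n : ℝ) * ε)) := by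
        intro n
        rw [hgdef]
        simp only [hΦ]
        calc ‖(inner ℂ ξ ((u n) w) : ℂ)‖ ≤ ‖ξ‖ * ‖(u n) w‖ := norm_inner_le_norm _ _
          _ ≤ ‖ξ‖ * (‖u n‖ * ‖w‖) := by
              gcongr
              exact (u (n:ℝ)).le_opNorm w
          _ ≤ ‖ξ‖ * ‖w‖ * Real.exp (-((n : ℝ) * ε)) := by
              have := hnorm (n : ℝ) (Nat.cast_nonneg n)
              calc ‖ξ‖ * (‖u n‖ * ‖w‖) = ‖ξ‖ * ‖w‖ * ‖u n‖ := by ring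
                _ ≤ ‖ξ‖ * ‖w‖ * Real.exp (-((n : ℝ) * ε)) := by
                    gcongr
      have hexp0 : Tendsto (fun n : ℕ => ‖ξ‖ * ‖w‖ * Real.exp (-((n : ℝ) * ε))) atTop (nhds 0) := by
        rw [show (0:ℝ) = ‖ξ‖ * ‖w‖ * 0 by ring]
        refine Tendsto.const_mul _ ?_
        refine Real.tendsto_exp_atBot.comp ?_
        refine tendsto_neg_atBot_iff.mpr ?_
        exact Tendsto.atTop_mul_const hε tendsto_natCast_atTop_atTop
      exact squeeze_zero_norm hb hexp0
    have hI : Tendsto (fun n : ℕ => ∫ τ in (0:ℝ)..(n:ℝ), c τ) atTop (nhds (g 0)) := by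
      have h1 : (fun n : ℕ => ∫ τ in (0:ℝ)..(n:ℝ), c τ) = fun n : ℕ => g 0 - g n := by
        funext n
        have := hFTC (n : ℝ)
        linear_combination -this
      rw [h1]
      simpa using tendsto_const_nhds.sub hgn
    -- real parts
    have hre : ∀ n : ℕ, (∫ τ in (0:ℝ)..(n:ℝ), c τ).re = ∫ τ in (0:ℝ)..(n:ℝ), (c τ).re := by
      intro n
      exact (Complex.reCLM.intervalIntegral_comp_comm (hccont.intervalIntegrable 0 n)).symm
    have him : ∀ n : ℕ, (∫ τ in (0:ℝ)..(n:ℝ), c τ).im = 0 := by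
      intro n
      have h1 : (∫ τ in (0:ℝ)..(n:ℝ), c τ).im = ∫ τ in (0:ℝ)..(n:ℝ), (c τ).im :=
        (Complex.imCLM.intervalIntegral_comp_comm (hccont.intervalIntegrable 0 n)).symm
      rw [h1]
      have h2 : ∀ τ ∈ Set.uIcc (0:ℝ) (n:ℝ), (c τ).im = 0 := by
        intro τ hτ
        rw [Set.uIcc_of_le (Nat.cast_nonneg n)] at hτ
        have h3 : 0 ≤ c τ := hme0 τ hτ.1 ξ hξ η hη
        exact ((Complex.le_def.mp h3).2).symm
      rw [intervalIntegral.integral_congr h2]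
      simp
    set δ : ℝ := ∫ τ in (0:ℝ)..(1:ℝ), (c τ).re with hδdef
    have hcr : Continuous fun τ => (c τ).re := Complex.continuous_re.comp hccont
    have hδ : 0 < δ := by
      rw [hδdef]
      refine intervalIntegral.intervalIntegral_pos_of_pos_on
        (hcr.intervalIntegrable 0 1) (fun x hx => ?_) zero_lt_one
      exact (Complex.lt_def.mp (hme x hx.1 ξ hξ hξ0 η hη hη0)).1
    have hmono : ∀ n : ℕ, 1 ≤ n → δ ≤ (∫ τ in (0:ℝ)..(n:ℝ), c τ).re := by
      intro n hn
      rw [hre n, hδdef]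
      refine intervalIntegral.integral_mono_interval le_rfl zero_le_one
        (by exact_mod_cast hn) ?_ (hcr.intervalIntegrable 0 n)
      filter_upwards [MeasureTheory.ae_restrict_mem (measurableSet_Ioc (a := (0:ℝ)) (b := (n:ℝ)))]
        with τ hτ
      exact le_of_lt (Complex.lt_def.mp (hme τ hτ.1 ξ hξ hξ0 η hη hη0)).1
    have hretend : Tendsto (fun n : ℕ => (∫ τ in (0:ℝ)..(n:ℝ), c τ).re) atTop (nhds ((g 0).re)) :=
      (Complex.continuous_re.tendsto _).comp hI
    have himtend : Tendsto (fun n : ℕ => (∫ τ in (0:ℝ)..(n:ℝ), c τ).im) atTop (nhds ((g 0).im)) :=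
      (Complex.continuous_im.tendsto _).comp hI
    have hge : δ ≤ (g 0).re :=
      ge_of_tendsto hretend (Filter.eventually_atTop.mpr ⟨1, fun n hn => hmono n hn⟩)
    have him0 : (g 0).im = 0 := by
      have h1 : (fun n : ℕ => (∫ τ in (0:ℝ)..(n:ℝ), c τ).im) = fun _ => (0:ℝ) := funext him
      rw [h1] at himtend
      exact tendsto_nhds_unique himtend tendsto_const_nhds
    rw [show (inner ℂ ξ w : ℂ) = g 0 from hg0.symm, Complex.lt_def]
    constructor
    · simpa using lt_of_lt_of_le hδ hge
    · simp [him0]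
  -- assemble
  intro η hη hη0
  refine ⟨?_, fun ξ hξ hξ0 => key η hη hη0 ξ hξ hξ0⟩
  have hmem : ∀ ξ ∈ P, 0 ≤ (inner ℂ (Ring.inverse B η) ξ : ℂ) := by
    intro ξ hξ
    rcases eq_or_ne ξ 0 with rfl | hξ0
    · simp
    · have h1 := key η hη hη0 ξ hξ hξ0
      have h2 : (inner ℂ (Ring.inverse B η) ξ : ℂ) =
          starRingEnd ℂ (inner ℂ ξ (Ring.inverse B η)) := (inner_conj_symm _ _).symm
      have him : (inner ℂ ξ ((Ring.inverse B) η) : ℂ).im = 0 := ((Complex.lt_def.mp h1).2).symm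
      rw [h2, Complex.conj_eq_iff_im.mpr him]
      exact le_of_lt h1
  show Ring.inverse B η ∈ P
  rw [hPdual]
  exact hmem
end
end

section
/- Let 𝔓 be a self-dual cone in a nontrivial complex Hilbert space ℌ, let A be a bounded self-adjoint operator with e^{−βA} ⊵ 0 w.r.t. 𝔓 for all β ≥ 0, and let B be a bounded self-adjoint operator that is ergodic w.r.t. 𝔓. Then e^{−β(A−B)} ⊳ 0 w.r.t. 𝔓 for all β > 0; in particular, for every real s > −E(A−B), the operator (A − B) + s·1 is invertible and ((A − B) + s·1)^{−1} ⊳ 0 w.r.t. 𝔓. -/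
open scoped ComplexOrder

noncomputable section

variable {H : Type*} [NormedAddCommGroup H] [InnerProductSpace ℂ H]

namespace ExpErgodicAux

open NormedSpace intervalIntegral MeasureTheory Set Filter Pointwise

set_option maxHeartbeats 1000000
set_option synthInstance.maxHeartbeats 400000

/-! ### Complex order helpers -/

lemma cx_nonneg_iff (z : ℂ) : 0 ≤ z ↔ 0 ≤ z.re ∧ z.im = 0 := by
  rw [Complex.le_def]; simp [eq_comm]

lemma cx_pos_iff (z : ℂ) : 0 < z ↔ 0 < z.re ∧ z.im = 0 := by
  rw [Complex.lt_def]; simp [eq_comm]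

/-! ### Cone basics -/

variable {P : Set H}

lemma cone_inner_nonneg (hP : IsSelfDualCone P) {x y : H} (hx : x ∈ P) (hy : y ∈ P) :
    0 ≤ (inner ℂ x y : ℂ) := by
  have h := hP.2.2.2
  rw [h] at hx
  exact hx y hy

lemma cone_mem_of_inner (hP : IsSelfDualCone P) {x : H}
    (h : ∀ ξ ∈ P, 0 ≤ (inner ℂ x ξ : ℂ)) : x ∈ P := by
  rw [hP.2.2.2]; exact h

lemma cone_mem_of_inner' (hP : IsSelfDualCone P) {x : H}
    (h : ∀ ξ ∈ P, 0 ≤ (inner ℂ ξ x : ℂ)) : x ∈ P := by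
  refine cone_mem_of_inner hP fun ξ hξ => ?_
  have h1 := h ξ hξ
  have him : (inner ℂ ξ x : ℂ).im = 0 := ((cx_nonneg_iff _).1 h1).2
  have : (inner ℂ x ξ : ℂ) = inner ℂ ξ x := by
    rw [← inner_conj_symm]
    exact Complex.conj_eq_iff_im.mpr him
  rw [this]; exact h1

lemma cone_zero_mem (hP : IsSelfDualCone P) : (0 : H) ∈ P :=
  cone_mem_of_inner hP fun ξ _ => by simp

lemma cone_add_mem (hP : IsSelfDualCone P) {x y : H} (hx : x ∈ P) (hy : y ∈ P) :
    x + y ∈ P := by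
  refine cone_mem_of_inner hP fun ξ hξ => ?_
  rw [inner_add_left]
  exact add_nonneg (cone_inner_nonneg hP hx hξ) (cone_inner_nonneg hP hy hξ)

lemma cone_smul_mem (hP : IsSelfDualCone P) {t : ℝ} (ht : 0 ≤ t) {x : H} (hx : x ∈ P) :
    t • x ∈ P := hP.2.2.1 t ht x hx

lemma cone_sum_mem (hP : IsSelfDualCone P) {v : ℕ → H} (h : ∀ j, v j ∈ P) (n : ℕ) :
    ∑ j ∈ Finset.range n, v j ∈ P := by
  induction n with
  | zero => simpa using cone_zero_mem hP
  | succ n ih => rw [Finset.sum_range_succ]; exact cone_add_mem hP ih (h n)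

/-! ### Integrals of cone-valued / nonneg functions -/

variable [CompleteSpace H]

instance instNormedAlgebraRatCLM : NormedAlgebra ℚ (H →L[ℂ] H) :=
  NormedAlgebra.restrictScalars ℚ ℂ (H →L[ℂ] H)

lemma re_integral {g : ℝ → ℂ} (hg : Continuous g) (b : ℝ) :
    (∫ t in (0:ℝ)..b, g t).re = ∫ t in (0:ℝ)..b, (g t).re := by
  have hgi : IntervalIntegrable g volume 0 b := hg.intervalIntegrable 0 b
  have hre := Complex.reCLM.intervalIntegral_comp_comm hgi
  simp only [Complex.reCLM_apply] at hre
  exact hre.symm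

lemma im_integral {g : ℝ → ℂ} (hg : Continuous g) (b : ℝ) :
    (∫ t in (0:ℝ)..b, g t).im = ∫ t in (0:ℝ)..b, (g t).im := by
  have hgi : IntervalIntegrable g volume 0 b := hg.intervalIntegrable 0 b
  have him := Complex.imCLM.intervalIntegral_comp_comm hgi
  simp only [Complex.imCLM_apply] at him
  exact him.symm

lemma inner_integral (ξ : H) {f : ℝ → H} (hf : Continuous f) (b : ℝ) :
    (inner ℂ ξ (∫ t in (0:ℝ)..b, f t) : ℂ) = ∫ t in (0:ℝ)..b, (inner ℂ ξ (f t) : ℂ) := by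
  have hfi : IntervalIntegrable f volume 0 b := hf.intervalIntegrable 0 b
  exact ((innerSL ℂ ξ).intervalIntegral_comp_comm hfi).symm

lemma integral_nonneg_cx {g : ℝ → ℂ} {b : ℝ} (hb : 0 ≤ b)
    (hg : Continuous g)
    (h : ∀ t ∈ Icc (0:ℝ) b, 0 ≤ g t) : 0 ≤ ∫ t in (0:ℝ)..b, g t := by
  rw [cx_nonneg_iff]
  constructor
  · rw [re_integral hg]
    exact intervalIntegral.integral_nonneg hb fun u hu => ((cx_nonneg_iff _).1 (h u hu)).1
  · rw [im_integral hg]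
    have : EqOn (fun t => (g t).im) (fun _ => (0:ℝ)) (uIcc (0:ℝ) b) := by
      intro t ht
      rw [uIcc_of_le hb] at ht
      exact ((cx_nonneg_iff _).1 (h t ht)).2
    rw [intervalIntegral.integral_congr this]
    simp

lemma integral_mem_cone (hP : IsSelfDualCone P) {f : ℝ → H} {b : ℝ} (hb : 0 ≤ b)
    (hf : Continuous f)
    (hmem : ∀ t ∈ Icc (0:ℝ) b, f t ∈ P) : (∫ t in (0:ℝ)..b, f t) ∈ P := by
  refine cone_mem_of_inner' hP fun ξ hξ => ?_
  rw [inner_integral ξ hf]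
  exact integral_nonneg_cx hb (continuous_const.inner hf)
    fun t ht => cone_inner_nonneg hP hξ (hmem t ht)

/-- If a continuous nonnegative function has zero integral, it vanishes on the interior. -/
lemma vanish_of_integral_zero {g : ℝ → ℝ} {b : ℝ} (hg : Continuous g)
    (h0 : ∀ t ∈ Icc (0:ℝ) b, 0 ≤ g t) (hI : ∫ t in (0:ℝ)..b, g t = 0) :
    ∀ t ∈ Ioo (0:ℝ) b, g t = 0 := by
  intro t ht
  have hb : (0:ℝ) < b := ht.1.trans ht.2
  set F : ℝ → ℝ := fun u => ∫ s in (0:ℝ)..u, g s with hF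
  have hFz : ∀ u ∈ Icc (0:ℝ) b, F u = 0 := by
    intro u hu
    have h1 : 0 ≤ F u :=
      intervalIntegral.integral_nonneg hu.1 fun s hs => h0 s ⟨hs.1, hs.2.trans hu.2⟩
    have h2 : 0 ≤ ∫ s in u..b, g s :=
      intervalIntegral.integral_nonneg hu.2 fun s hs => h0 s ⟨hu.1.trans hs.1, hs.2⟩
    have h3 : F u + ∫ s in u..b, g s = 0 := by
      rw [hF]
      rw [intervalIntegral.integral_add_adjacent_intervals (hg.intervalIntegrable _ _)
        (hg.intervalIntegrable _ _)]
      exact hI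
    linarith
  have hd : HasDerivAt F (g t) t :=
    intervalIntegral.integral_hasDerivAt_right (hg.intervalIntegrable _ _)
      (hg.stronglyMeasurableAtFilter _ _) hg.continuousAt
  have hev : F =ᶠ[nhds t] fun _ => (0:ℝ) := by
    filter_upwards [Ioo_mem_nhds ht.1 ht.2] with u hu
    exact hFz u ⟨hu.1.le, hu.2.le⟩
  have hd0 : HasDerivAt F 0 t := (hasDerivAt_const t (0:ℝ)).congr_of_eventuallyEq hev
  exact hd.unique hd0

/-! ### Self-adjointness helpers -/

lemma rsmul_eq {r : ℝ} {X : H →L[ℂ] H} : (r : ℂ) • X = r • X := by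
  simp [Complex.coe_smul]

lemma sa_inner {X : H →L[ℂ] H} (hX : IsSelfAdjoint X) (x y : H) :
    (inner ℂ (X x) y : ℂ) = inner ℂ x (X y) := by
  conv_lhs => rw [← hX.adjoint_eq]
  exact ContinuousLinearMap.adjoint_inner_left X y x

lemma real_smul_sa {r : ℝ} {X : H →L[ℂ] H} (hX : IsSelfAdjoint X) :
    IsSelfAdjoint (r • X) := by
  rw [← rsmul_eq, IsSelfAdjoint, star_smul, hX.star_eq]
  congr 1
  simp

/-! ### The basic semigroup `Mop` -/

variable (A B : H →L[ℂ] H)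

/-- `Mop A t = e^{-tA}`. -/
def Mop (t : ℝ) : H →L[ℂ] H := exp (t • (-A))

lemma Mop_eq_complex (t : ℝ) : Mop A t = exp (-(t : ℂ) • A) := by
  rw [Mop, neg_smul, ← smul_neg, rsmul_eq]

lemma Mop_real (t : ℝ) : Mop A t = exp (t • (-A)) := by
  rfl

lemma Mop_cont : Continuous (Mop A) :=
  exp_continuous.comp (continuous_id.smul continuous_const)

lemma Mop_zero : Mop A 0 = 1 := by simp [Mop, exp_zero]

lemma Mop_sa (hA : IsSelfAdjoint A) (t : ℝ) : IsSelfAdjoint (Mop A t) := by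
  rw [Mop_eq_complex, IsSelfAdjoint, star_exp, star_smul, hA.star_eq]
  congr 2
  simp

lemma Mop_ne_zero {t : ℝ} {x : H} (hx : x ≠ 0) : Mop A t x ≠ 0 := by
  intro h
  apply hx
  obtain ⟨u, hu⟩ := isUnit_exp (t • (-A))
  have h1 : ((u⁻¹ : (H →L[ℂ] H)ˣ) : H →L[ℂ] H) ((Mop A t) x) = 0 := by rw [h]; simp
  rw [Mop, ← hu] at h1
  have h2 : ((u⁻¹ : (H →L[ℂ] H)ˣ) * (u : H →L[ℂ] H)) x = 0 := h1
  rwa [u.inv_mul, ContinuousLinearMap.one_apply] at h2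

lemma Mop_hasDerivAt (t : ℝ) :
    HasDerivAt (fun v : ℝ => Mop A v) (Mop A t * (-A)) t := by
  have h := hasDerivAt_exp_smul_const (𝕂 := ℝ) (-A) t
  have hfun : (fun v : ℝ => Mop A v) = fun v : ℝ => exp (v • (-A)) := by
    funext v; exact Mop_real A v
  rw [hfun, Mop_real]
  exact h

/-- Restriction of scalars as a continuous `ℝ`-linear map on operators. -/
def rs : (H →L[ℂ] H) →L[ℝ] (H →L[ℝ] H) :=
  (ContinuousLinearMap.restrictScalarsIsometry ℂ H H ℝ ℝ).toContinuousLinearMap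

lemma rs_apply (X : H →L[ℂ] H) (v : H) : rs X v = X v := rfl

lemma Mop_hasDerivAt_rs (t : ℝ) :
    HasDerivAt (fun v : ℝ => rs (Mop A v)) (rs (Mop A t * (-A))) t := by
  have h := ((rs : (H →L[ℂ] H) →L[ℝ] (H →L[ℝ] H)).hasFDerivAt).comp_hasDerivAt t
    (Mop_hasDerivAt A t)
  exact h

lemma Mop_pos (hexp : ∀ β : ℝ, 0 ≤ β → PosPres P (exp (-(β : ℂ) • A)))
    {t : ℝ} (ht : 0 ≤ t) : PosPres P (Mop A t) := by
  rw [Mop_eq_complex]; exact hexp t ht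

/-! ### The Volterra operator and Dyson iterates -/

/-- `Vint A B f t = ∫_0^t e^{-(t-s)A} B f(s) ds`. -/
def Vint (f : ℝ → H) (t : ℝ) : H := ∫ s in (0:ℝ)..t, Mop A (t - s) (B (f s))

lemma Vint_integrand_cont {f : ℝ → H} (hf : Continuous f) (t : ℝ) :
    Continuous fun s => Mop A (t - s) (B (f s)) :=
  (((Mop_cont A).comp (continuous_const.sub continuous_id)).clm_apply
    (B.continuous.comp hf))

lemma Vint_cont {f : ℝ → H} (hf : Continuous f) : Continuous (Vint A B f) := by
  apply intervalIntegral.continuous_parametric_intervalIntegral_of_continuous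
    (μ := volume) ?_ continuous_id
  show Continuous fun p : ℝ × ℝ => Mop A (p.1 - p.2) (B (f p.2))
  exact ((Mop_cont A).comp (continuous_fst.sub continuous_snd)).clm_apply
    (B.continuous.comp (hf.comp continuous_snd))

lemma Vint_mem (hP : IsSelfDualCone P)
    (hexp : ∀ β : ℝ, 0 ≤ β → PosPres P (exp (-(β : ℂ) • A)))
    (hBpos : PosPres P B) {f : ℝ → H} (hf : Continuous f) {t : ℝ} (ht : 0 ≤ t)
    (hm : ∀ s ∈ Icc (0:ℝ) t, f s ∈ P) : Vint A B f t ∈ P := by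
  refine integral_mem_cone hP ht (Vint_integrand_cont A B hf t)
    fun s hs => ?_
  exact Mop_pos A hexp (by linarith [hs.1, hs.2]) _ (hBpos _ (hm s hs))

lemma Vint_add {f g : ℝ → H} (hf : Continuous f) (hg : Continuous g) (t : ℝ) :
    Vint A B (fun s => f s + g s) t = Vint A B f t + Vint A B g t := by
  unfold Vint
  rw [← intervalIntegral.integral_add ((Vint_integrand_cont A B hf t).intervalIntegrable _ _)
    ((Vint_integrand_cont A B hg t).intervalIntegrable _ _)]
  congr 1
  funext s
  simp

/-- The Duhamel formula: `e^{-β(A-B)} η = e^{-βA} η + ∫_0^β e^{-(β-t)A} B e^{-t(A-B)} η dt`. -/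
lemma duhamel (β : ℝ) (η : H) :
    Mop (A - B) β η = Mop A β η + Vint A B (fun t => Mop (A - B) t η) β := by
  have key : ∀ t : ℝ, HasDerivAt
      (fun u : ℝ => rs (Mop A (β - u)) (rs (Mop (A - B) u) η))
      (Mop A (β - t) (B (Mop (A - B) t η))) t := by
    intro t
    have h2 : HasDerivAt (fun u : ℝ => β - u) (-1 : ℝ) t := by
      simpa using (hasDerivAt_id t).const_sub β
    have hop : HasDerivAt (fun u : ℝ => rs (Mop A (β - u)))
        ((-1 : ℝ) • rs (Mop A (β - t) * (-A))) t :=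
      (Mop_hasDerivAt_rs A (β - t)).scomp t h2
    have hvec : HasDerivAt (fun u : ℝ => rs (Mop (A - B) u) η)
        (rs (Mop (A - B) t * (-(A - B))) η + rs (Mop (A - B) t) 0) t :=
      (Mop_hasDerivAt_rs (A - B) t).clm_apply (hasDerivAt_const t η)
    have hcomb := hop.clm_apply hvec
    have hcomm : Mop (A - B) t * (A - B) = (A - B) * Mop (A - B) t := by
      have hc : Commute (t • (-(A - B))) (A - B) :=
        (((Commute.refl (A - B)).neg_left).smul_left t)
      exact (hc.exp_left).eq
    have hval : ((-1 : ℝ) • rs (Mop A (β - t) * (-A))) (rs (Mop (A - B) t) η) +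
        rs (Mop A (β - t)) (rs (Mop (A - B) t * (-(A - B))) η + rs (Mop (A - B) t) 0)
        = Mop A (β - t) (B (Mop (A - B) t η)) := by
      simp only [rs_apply, map_zero, add_zero, ContinuousLinearMap.smul_apply,
        ContinuousLinearMap.mul_apply, ContinuousLinearMap.neg_apply, map_neg,
        neg_smul, one_smul, neg_neg]
      rw [← sub_eq_add_neg, ← map_sub]
      congr 1
      have hswap : Mop (A - B) t ((A - B) η) = (A - B) (Mop (A - B) t η) := by
        have e1 : Mop (A - B) t ((A - B) η) = (Mop (A - B) t * (A - B)) η := rfl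
        rw [e1, hcomm]
        rfl
      rw [hswap]
      simp [ContinuousLinearMap.sub_apply, sub_sub_cancel]
    rw [hval] at hcomb
    exact hcomb
  have hcont : Continuous fun t : ℝ => Mop A (β - t) (B (Mop (A - B) t η)) :=
    ((Mop_cont A).comp (continuous_const.sub continuous_id)).clm_apply
      (B.continuous.comp ((Mop_cont (A - B)).clm_apply continuous_const))
  have hFTC := intervalIntegral.integral_eq_sub_of_hasDerivAt
    (f := fun u : ℝ => rs (Mop A (β - u)) (rs (Mop (A - B) u) η)) (fun t _ => key t)
    (hcont.intervalIntegrable 0 β)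
  have hV : Vint A B (fun t => Mop (A - B) t η) β
      = Mop (A - B) β η - Mop A β η := by
    rw [Vint, hFTC]
    simp [rs_apply, Mop_zero]
  rw [hV]
  abel

variable (η : H)

/-- The Dyson iterates starting from the free semigroup. -/
def Tseq : ℕ → ℝ → H
  | 0 => fun t => Mop A t η
  | (k + 1) => Vint A B (Tseq k)

/-- The remainder iterates starting from the interacting semigroup. -/
def Sseq : ℕ → ℝ → H
  | 0 => fun t => Mop (A - B) t η
  | (k + 1) => Vint A B (Sseq k)

lemma Tseq_cont : ∀ k, Continuous (Tseq A B η k)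
  | 0 => (Mop_cont A).clm_apply continuous_const
  | (k + 1) => Vint_cont A B (Tseq_cont k)

lemma Sseq_cont : ∀ k, Continuous (Sseq A B η k)
  | 0 => (Mop_cont (A - B)).clm_apply continuous_const
  | (k + 1) => Vint_cont A B (Sseq_cont k)

variable {η}

lemma Tseq_mem (hP : IsSelfDualCone P)
    (hexp : ∀ β : ℝ, 0 ≤ β → PosPres P (exp (-(β : ℂ) • A)))
    (hBpos : PosPres P B) (hη : η ∈ P) :
    ∀ k, ∀ t : ℝ, 0 ≤ t → Tseq A B η k t ∈ P := by
  intro k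
  induction k with
  | zero => exact fun t ht => Mop_pos A hexp ht _ hη
  | succ k ih =>
    intro t ht
    exact Vint_mem A B hP hexp hBpos (Tseq_cont A B η k) ht fun s hs => ih s hs.1

variable (η)

lemma step_eq : ∀ n (β : ℝ),
    Sseq A B η n β = Tseq A B η n β + Sseq A B η (n + 1) β := by
  intro n
  induction n with
  | zero => exact fun β => duhamel A B β η
  | succ n ih =>
    intro β
    have h2 : Sseq A B η n = fun t => Tseq A B η n t + Sseq A B η (n + 1) t := by
      funext t; exact ih t
    calc Sseq A B η (n + 1) β
        = Vint A B (Sseq A B η n) β := rfl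
      _ = Vint A B (fun t => Tseq A B η n t + Sseq A B η (n + 1) t) β := by rw [h2]
      _ = Vint A B (Tseq A B η n) β + Vint A B (Sseq A B η (n + 1)) β :=
          Vint_add A B (Tseq_cont A B η n) (Sseq_cont A B η (n + 1)) β
      _ = Tseq A B η (n + 1) β + Sseq A B η (n + 2) β := rfl

lemma expansion : ∀ n (β : ℝ),
    Mop (A - B) β η = (∑ j ∈ Finset.range n, Tseq A B η j β) + Sseq A B η n β := by
  intro n
  induction n with
  | zero => intro β; simp [Sseq]
  | succ n ih =>
    intro β
    rw [ih β, step_eq A B η n β, Finset.sum_range_succ]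
    abel

/-- Norm bound on the remainder. -/
lemma Sseq_bound {b : ℝ} (hb : 0 ≤ b) :
    ∃ C K : ℝ, 0 ≤ C ∧ 0 ≤ K ∧
      ∀ n, ∀ t ∈ Icc (0:ℝ) b, ‖Sseq A B η n t‖ ≤ C * (K ^ n * t ^ n / n.factorial) := by
  obtain ⟨MA, hMA⟩ := isCompact_Icc.exists_bound_of_continuousOn
    ((Mop_cont A).continuousOn : ContinuousOn (Mop A) (Icc (0:ℝ) b))
  obtain ⟨C, hC⟩ := isCompact_Icc.exists_bound_of_continuousOn
    (((Mop_cont (A - B)).clm_apply continuous_const).continuousOn :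
      ContinuousOn (fun t => Mop (A - B) t η) (Icc (0:ℝ) b))
  refine ⟨max C 0, ‖B‖ * max MA 0, le_max_right _ _,
    mul_nonneg (norm_nonneg _) (le_max_right _ _), ?_⟩
  set K := ‖B‖ * max MA 0 with hK
  have hK0 : 0 ≤ K := mul_nonneg (norm_nonneg _) (le_max_right _ _)
  intro n
  induction n with
  | zero =>
    intro t ht
    simp only [pow_zero, Nat.factorial_zero, Nat.cast_one, mul_one, one_mul, div_one]
    exact le_trans (hC t ht) (le_max_left _ _)
  | succ n ih =>
    intro t ht
    have htt : (0:ℝ) ≤ t := ht.1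
    have hSc : Continuous (Sseq A B η n) := Sseq_cont A B η n
    have hIc : Continuous fun s => Mop A (t - s) (B (Sseq A B η n s)) :=
      Vint_integrand_cont A B hSc t
    have h1 : ‖Sseq A B η (n + 1) t‖ ≤ ∫ s in (0:ℝ)..t, ‖Mop A (t - s) (B (Sseq A B η n s))‖ := by
      have : Sseq A B η (n + 1) t = ∫ s in (0:ℝ)..t, Mop A (t - s) (B (Sseq A B η n s)) := rfl
      rw [this]
      exact intervalIntegral.norm_integral_le_integral_norm htt
    have h2 : ∫ s in (0:ℝ)..t, ‖Mop A (t - s) (B (Sseq A B η n s))‖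
        ≤ ∫ s in (0:ℝ)..t, (max C 0 * K ^ (n+1) / n.factorial) * s ^ n := by
      apply intervalIntegral.integral_mono_on htt
        (hIc.norm.intervalIntegrable _ _)
        (((continuous_const.mul (continuous_pow n))).intervalIntegrable _ _)
      intro s hs
      have hs' : s ∈ Icc (0:ℝ) b := ⟨hs.1, hs.2.trans ht.2⟩
      have hts : t - s ∈ Icc (0:ℝ) b := ⟨by linarith [hs.1, hs.2], by linarith [ht.2, hs.1]⟩
      calc ‖Mop A (t - s) (B (Sseq A B η n s))‖
          ≤ ‖Mop A (t - s)‖ * ‖B (Sseq A B η n s)‖ := (Mop A (t - s)).le_opNorm _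
        _ ≤ max MA 0 * (‖B‖ * ‖Sseq A B η n s‖) := by
            apply mul_le_mul (le_trans (hMA _ hts) (le_max_left _ _))
              (B.le_opNorm _) (norm_nonneg _) (le_max_right _ _)
        _ ≤ max MA 0 * (‖B‖ * (max C 0 * (K ^ n * s ^ n / n.factorial))) := by
            apply mul_le_mul_of_nonneg_left _ (le_max_right _ _)
            exact mul_le_mul_of_nonneg_left (ih s hs') (norm_nonneg _)
        _ = (max C 0 * K ^ (n+1) / n.factorial) * s ^ n := by
            rw [hK]; ring
    have h3 : ∫ s in (0:ℝ)..t, (max C 0 * K ^ (n+1) / n.factorial) * s ^ n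
        = max C 0 * (K ^ (n+1) * t ^ (n+1) / (n+1).factorial) := by
      rw [intervalIntegral.integral_const_mul, integral_pow]
      rw [Nat.factorial_succ]
      push_cast
      have hnf : ((n.factorial : ℝ)) ≠ 0 := Nat.cast_ne_zero.mpr n.factorial_ne_zero
      have hn1 : ((n : ℝ) + 1) ≠ 0 := by positivity
      field_simp
      ring
    calc ‖Sseq A B η (n + 1) t‖ ≤ _ := h1
      _ ≤ _ := h2
      _ = _ := h3

variable {η}

/-- `e^{-t(A-B)}` preserves the cone for `t ≥ 0`. -/
lemma Gmem (hP : IsSelfDualCone P)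
    (hexp : ∀ β : ℝ, 0 ≤ β → PosPres P (exp (-(β : ℂ) • A)))
    (hBpos : PosPres P B) (hη : η ∈ P) {b : ℝ} (hb : 0 ≤ b) :
    Mop (A - B) b η ∈ P := by
  obtain ⟨C, K, hC0, hK0, hbound⟩ := Sseq_bound A B η hb
  have hten : Tendsto (fun n => ∑ j ∈ Finset.range n, Tseq A B η j b) atTop
      (nhds (Mop (A - B) b η)) := by
    rw [tendsto_iff_norm_sub_tendsto_zero]
    have hle : ∀ n, ‖(∑ j ∈ Finset.range n, Tseq A B η j b) - Mop (A - B) b η‖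
        ≤ C * ((K * b) ^ n / n.factorial) := by
      intro n
      have he := expansion A B η n b
      have : (∑ j ∈ Finset.range n, Tseq A B η j b) - Mop (A - B) b η = -(Sseq A B η n b) := by
        rw [he]; abel
      rw [this, norm_neg]
      calc ‖Sseq A B η n b‖ ≤ C * (K ^ n * b ^ n / n.factorial) :=
            hbound n b ⟨le_refl 0 |>.trans hb, le_refl b⟩
        _ = C * ((K * b) ^ n / n.factorial) := by rw [mul_pow]
    refine squeeze_zero (fun n => norm_nonneg _) hle ?_
    have := (FloorSemiring.tendsto_pow_div_factorial_atTop (K * b)).const_mul C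
    simpa using this
  exact hP.1.mem_of_tendsto hten
    (Filter.Eventually.of_forall fun n =>
      cone_sum_mem hP (fun j => Tseq_mem A B hP hexp hBpos hη j b hb) n)

lemma Sseq_mem (hP : IsSelfDualCone P)
    (hexp : ∀ β : ℝ, 0 ≤ β → PosPres P (exp (-(β : ℂ) • A)))
    (hBpos : PosPres P B) (hη : η ∈ P) :
    ∀ n, ∀ t : ℝ, 0 ≤ t → Sseq A B η n t ∈ P := by
  intro n
  induction n with
  | zero => exact fun t ht => Gmem A B hP hexp hBpos hη ht
  | succ n ih =>
    intro t ht
    exact Vint_mem A B hP hexp hBpos (Sseq_cont A B η n) ht fun s hs => ih s hs.1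

/-- The key strict positivity statement. -/
lemma strict_pos (hP : IsSelfDualCone P) (hA : IsSelfAdjoint A) (hB : IsSelfAdjoint B)
    (hexp : ∀ β : ℝ, 0 ≤ β → PosPres P (exp (-(β : ℂ) • A)))
    (hBerg : IsErgodic P B) {β : ℝ} (hβ : 0 < β)
    (hη : η ∈ P) (hη0 : η ≠ 0) {ζ : H} (hζ : ζ ∈ P) (hζ0 : ζ ≠ 0) :
    0 < (inner ℂ ζ (Mop (A - B) β η) : ℂ) := by
  have hBpos := hBerg.1
  have hmem : Mop (A - B) β η ∈ P := Gmem A B hP hexp hBpos hη hβ.le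
  have hnn : 0 ≤ (inner ℂ ζ (Mop (A - B) β η) : ℂ) := cone_inner_nonneg hP hζ hmem
  rcases lt_or_eq_of_le hnn with hlt | heq
  · exact hlt
  exfalso
  -- all Dyson terms vanish
  have hT0 : ∀ k, (inner ℂ ζ (Tseq A B η k β) : ℂ) = 0 := by
    intro k
    have he := expansion A B η (k + 1) β
    have hsum : (inner ℂ ζ (Mop (A - B) β η) : ℂ)
        = (∑ j ∈ Finset.range (k + 1), (inner ℂ ζ (Tseq A B η j β) : ℂ))
          + (inner ℂ ζ (Sseq A B η (k + 1) β) : ℂ) := by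
      rw [he, inner_add_right, inner_sum]
    have hnnT : ∀ j, 0 ≤ (inner ℂ ζ (Tseq A B η j β) : ℂ) :=
      fun j => cone_inner_nonneg hP hζ (Tseq_mem A B hP hexp hBpos hη j β hβ.le)
    have hnnS : 0 ≤ (inner ℂ ζ (Sseq A B η (k + 1) β) : ℂ) :=
      cone_inner_nonneg hP hζ (Sseq_mem A B hP hexp hBpos hη (k + 1) β hβ.le)
    -- pass to real parts
    have hre : (0:ℝ) = (∑ j ∈ Finset.range (k + 1), ((inner ℂ ζ (Tseq A B η j β) : ℂ)).re)
        + ((inner ℂ ζ (Sseq A B η (k + 1) β) : ℂ)).re := by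
      have := congrArg Complex.re hsum
      rw [← heq] at this
      simpa [Complex.add_re, Complex.re_sum] using this
    have hreT : ∀ j, 0 ≤ ((inner ℂ ζ (Tseq A B η j β) : ℂ)).re :=
      fun j => ((cx_nonneg_iff _).1 (hnnT j)).1
    have hreS : 0 ≤ ((inner ℂ ζ (Sseq A B η (k + 1) β) : ℂ)).re :=
      ((cx_nonneg_iff _).1 hnnS).1
    have hsum0 : (∑ j ∈ Finset.range (k + 1), ((inner ℂ ζ (Tseq A B η j β) : ℂ)).re) = 0 := by
      have h1 : 0 ≤ ∑ j ∈ Finset.range (k + 1), ((inner ℂ ζ (Tseq A B η j β) : ℂ)).re :=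
        Finset.sum_nonneg fun j _ => hreT j
      linarith
    have hterm : ((inner ℂ ζ (Tseq A B η k β) : ℂ)).re = 0 := by
      have := (Finset.sum_eq_zero_iff_of_nonneg (fun j _ => hreT j)).1 hsum0 k
        (Finset.self_mem_range_succ k)
      exact this
    apply Complex.ext
    · simpa using hterm
    · simpa using ((cx_nonneg_iff _).1 (hnnT k)).2
  -- vanishing propagates down to `⟨ζ, e^{-γA} B^j η⟩ = 0`
  have Z : ∀ j, ∀ ζ' ∈ P, ∀ γ : ℝ, 0 < γ → (inner ℂ ζ' (Tseq A B η j γ) : ℂ) = 0 →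
      (inner ℂ ζ' (Mop A γ ((B ^ j) η)) : ℂ) = 0 := by
    intro j
    induction j with
    | zero =>
      intro ζ' _ γ _ h0
      simpa [Tseq, pow_zero, ContinuousLinearMap.one_apply] using h0
    | succ j ih =>
      intro ζ' hζ' γ hγ h0
      set g : ℝ → ℂ := fun t => inner ℂ ζ' (Mop A (γ - t) (B (Tseq A B η j t))) with hg
      have hgc : Continuous g :=
        continuous_const.inner (Vint_integrand_cont A B (Tseq_cont A B η j) γ)
      have hgmem : ∀ t ∈ Icc (0:ℝ) γ, 0 ≤ g t := by
        intro t ht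
        exact cone_inner_nonneg hP hζ'
          (Mop_pos A hexp (by linarith [ht.1, ht.2]) _
            (hBpos _ (Tseq_mem A B hP hexp hBpos hη j t ht.1)))
      have hI : (∫ t in (0:ℝ)..γ, g t) = 0 := by
        have h1 : (inner ℂ ζ' (Tseq A B η (j+1) γ) : ℂ) = ∫ t in (0:ℝ)..γ, g t := by
          have h2 : Tseq A B η (j+1) γ
              = ∫ t in (0:ℝ)..γ, Mop A (γ - t) (B (Tseq A B η j t)) := rfl
          rw [h2]
          exact inner_integral ζ' (Vint_integrand_cont A B (Tseq_cont A B η j) γ) γ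
        rw [← h1, h0]
      have hg0 : ∀ t ∈ Ioo (0:ℝ) γ, g t = 0 := by
        have hrezero : ∀ t ∈ Ioo (0:ℝ) γ, (g t).re = 0 := by
          apply vanish_of_integral_zero (g := fun t => (g t).re)
            (Complex.continuous_re.comp hgc)
            (fun t ht => ((cx_nonneg_iff _).1 (hgmem t ht)).1)
          rw [← re_integral hgc, hI]
          simp
        intro t ht
        apply Complex.ext
        · simpa using hrezero t ht
        · simpa using ((cx_nonneg_iff _).1 (hgmem t ⟨ht.1.le, ht.2.le⟩)).2
      -- apply the induction hypothesis at interior times and pass to the limit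
      set h : ℝ → ℂ := fun t => inner ℂ (B (Mop A (γ - t) ζ')) (Mop A t ((B ^ j) η)) with hh
      have hhc : Continuous h := by
        apply Continuous.inner
        · exact B.continuous.comp (((Mop_cont A).comp
            (continuous_const.sub continuous_id)).clm_apply continuous_const)
        · exact (Mop_cont A).clm_apply continuous_const
      have hhz : ∀ t ∈ Ioo (0:ℝ) γ, h t = 0 := by
        intro t ht
        apply ih (B (Mop A (γ - t) ζ'))
          (hBpos _ (Mop_pos A hexp (by linarith [ht.1, ht.2]) _ hζ')) t ht.1
        have hgt := hg0 t ht
        rw [hg] at hgt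
        calc (inner ℂ (B (Mop A (γ - t) ζ')) (Tseq A B η j t) : ℂ)
            = inner ℂ (Mop A (γ - t) ζ') (B (Tseq A B η j t)) := sa_inner hB _ _
          _ = inner ℂ ζ' (Mop A (γ - t) (B (Tseq A B η j t))) := sa_inner (Mop_sa A hA _) _ _
          _ = 0 := hgt
      have hcl : EqOn h (fun _ => (0:ℂ)) (closure (Ioo (0:ℝ) γ)) := by
        have heqon : EqOn h (fun _ => (0:ℂ)) (Ioo (0:ℝ) γ) := fun t ht => hhz t ht
        exact heqon.closure hhc continuous_const
      have h00 : h 0 = 0 := by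
        apply hcl
        rw [closure_Ioo hγ.ne]
        exact ⟨le_refl 0, hγ.le⟩
      rw [hh] at h00
      simp only [sub_zero, Mop_zero, ContinuousLinearMap.one_apply] at h00
      calc (inner ℂ ζ' (Mop A γ ((B ^ (j+1)) η)) : ℂ)
          = inner ℂ ζ' (Mop A γ (B ((B ^ j) η))) := by
            congr 2
            rw [pow_succ']
            rfl
        _ = inner ℂ (Mop A γ ζ') (B ((B ^ j) η)) := (sa_inner (Mop_sa A hA _) _ _).symm
        _ = inner ℂ (B (Mop A γ ζ')) ((B ^ j) η) := (sa_inner hB _ _).symm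
        _ = 0 := h00
  -- contradiction with ergodicity
  have hMζ : Mop A β ζ ∈ P := Mop_pos A hexp hβ.le _ hζ
  have hMζ0 : Mop A β ζ ≠ 0 := Mop_ne_zero A hζ0
  obtain ⟨k, hk⟩ := hBerg.2 (Mop A β ζ) hMζ hMζ0 η hη hη0
  have hzero := Z k ζ hζ β hβ (hT0 k)
  have : (inner ℂ (Mop A β ζ) ((B ^ k) η) : ℂ) = 0 := by
    rw [sa_inner (Mop_sa A hA β)]
    exact hzero
  rw [this] at hk
  exact lt_irrefl _ hk

/-! ### Lemmas for the resolvent -/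

lemma sa_smul_one (s : ℝ) : IsSelfAdjoint ((s : ℂ) • (1 : H →L[ℂ] H)) := by
  rw [IsSelfAdjoint, star_smul, star_one]
  congr 1
  simp

lemma Mop_norm_decay [Nontrivial H] {D : H →L[ℂ] H} (hD : IsSelfAdjoint D) {δ : ℝ}
    (hspec : ∀ t ∈ spectrum ℝ D, δ ≤ t) {T : ℝ} (hT : 0 ≤ T) :
    ‖Mop D T‖ ≤ Real.exp (-(T * δ)) := by
  rcases eq_or_lt_of_le hT with h0 | hT'
  · rw [← h0, Mop_zero]
    simp [norm_one]
  · have hsa : IsSelfAdjoint (T • (-D)) := real_smul_sa hD.neg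
    have hM : Mop D T = cfc Real.exp (T • (-D)) := by
      rw [Mop, CFC.real_exp_eq_normedSpace_exp hsa]
    rw [hM]
    apply norm_cfc_le (Real.exp_nonneg _)
    intro x hx
    have hrw : T • (-D) = (-T) • D := by rw [smul_neg, neg_smul]
    rw [hrw] at hx
    have hTne : (-T) ≠ 0 := neg_ne_zero.mpr hT'.ne'
    have hx' : x ∈ (Units.mk0 (-T) hTne) • spectrum ℝ D := by
      rw [← spectrum.unit_smul_eq_smul D (Units.mk0 (-T) hTne)]
      exact hx
    obtain ⟨y, hy, rfl⟩ := hx'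
    have hyδ := hspec y hy
    show ‖Real.exp ((Units.mk0 (-T) hTne : ℝ) • y)‖ ≤ Real.exp (-(T * δ))
    have hxy : (Units.mk0 (-T) hTne : ℝ) • y = (-T) * y := rfl
    rw [hxy, Real.norm_eq_abs, Real.abs_exp]
    apply Real.exp_le_exp.mpr
    nlinarith

lemma resolvent_integral {D : H →L[ℂ] H} (hunit : IsUnit D) (T : ℝ) :
    ∫ t in (0:ℝ)..T, Mop D t = Ring.inverse D - Ring.inverse D * Mop D T := by
  have key : ∀ t : ℝ, HasDerivAt (fun u : ℝ => -(Ring.inverse D * Mop D u)) (Mop D t) t := by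
    intro t
    have h1 := Mop_hasDerivAt D t
    have h2 := (h1.const_mul (Ring.inverse D)).neg
    refine h2.congr_deriv ?_
    have hcomm : Mop D t * D = D * Mop D t := by
      have hc : Commute (t • (-D)) D := ((Commute.refl D).neg_left).smul_left t
      exact (hc.exp_left).eq
    rw [mul_neg, mul_neg, neg_neg, hcomm, ← mul_assoc, Ring.inverse_mul_cancel _ hunit, one_mul]
  have hFTC := intervalIntegral.integral_eq_sub_of_hasDerivAt
    (f := fun u : ℝ => -(Ring.inverse D * Mop D u)) (fun t _ => key t)
    ((Mop_cont D).intervalIntegrable 0 T)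
  rw [hFTC, Mop_zero, mul_one]
  abel

lemma Mop_split (C : H →L[ℂ] H) (s t : ℝ) :
    Mop (C + (s : ℂ) • (1 : H →L[ℂ] H)) t = Real.exp (-(t * s)) • Mop C t := by
  have h1 : t • (-(C + (s : ℂ) • (1 : H →L[ℂ] H)))
      = t • (-C) + ((-(t * s) : ℝ) : ℂ) • (1 : H →L[ℂ] H) := by
    rw [neg_add, smul_add]
    congr 1
    rw [← rsmul_eq (r := t), smul_neg, smul_smul]
    rw [← neg_smul]
    congr 1
    push_cast
    ring
  have hc : Commute (t • (-C)) (((-(t * s) : ℝ) : ℂ) • (1 : H →L[ℂ] H)) :=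
    (Commute.one_right (t • (-C))).smul_right _
  rw [Mop, h1, exp_add_of_commute hc]
  have h2 : exp (((-(t * s) : ℝ) : ℂ) • (1 : H →L[ℂ] H))
      = ((Real.exp (-(t * s)) : ℝ) : ℂ) • (1 : H →L[ℂ] H) := by
    rw [← Algebra.algebraMap_eq_smul_one, ← algebraMap_exp_comm,
      ← Complex.exp_eq_exp_ℂ, ← Complex.ofReal_exp, Algebra.algebraMap_eq_smul_one]
  rw [h2, mul_smul_comm, mul_one, rsmul_eq]
  rfl

end ExpErgodicAux

/-- Proposition A.8: if `e^{-βA} ⊵ 0` w.r.t. `P` for all `β ≥ 0` and `B` is ergodic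
w.r.t. `P`, then `e^{-β(A-B)} ⊳ 0` w.r.t. `P` for all `β > 0`; in particular the
resolvents `((A-B) + s)⁻¹`, `s > -E(A-B)`, improve positivity w.r.t. `P`. -/
theorem exp_sub_ergodic_posImp [CompleteSpace H] [Nontrivial H]
    (P : Set H) (hP : IsSelfDualCone P) (A B : H →L[ℂ] H)
    (hA : IsSelfAdjoint A) (hB : IsSelfAdjoint B)
    (hexp : ∀ β : ℝ, 0 ≤ β → PosPres P (NormedSpace.exp (-(β : ℂ) • A)))
    (hBerg : IsErgodic P B) :
    (∀ β : ℝ, 0 < β → PosImp P (NormedSpace.exp (-(β : ℂ) • (A - B)))) ∧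
    (∀ s : ℝ, -specInf (A - B) < s →
      IsUnit ((A - B) + (s : ℂ) • 1) ∧
        PosImp P (Ring.inverse ((A - B) + (s : ℂ) • 1))) := by
  open ExpErgodicAux NormedSpace intervalIntegral MeasureTheory Set Filter in

  have hBpos := hBerg.1
  -- Part 1: the semigroup improves positivity
  have part1 : ∀ β : ℝ, 0 < β → PosImp P (NormedSpace.exp (-(β : ℂ) • (A - B))) := by
    intro β hβ ξ hξ hξ0
    rw [← Mop_eq_complex]
    exact ⟨Gmem A B hP hexp hBpos hξ hβ.le,
      fun ζ hζ hζ0 => strict_pos A B hP hA hB hexp hBerg hβ hξ hξ0 hζ hζ0⟩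
  refine ⟨part1, ?_⟩
  intro s hs
  set D := A - B + (s : ℂ) • (1 : H →L[ℂ] H) with hDdef
  have hbddS : BddBelow {t : ℝ | (t : ℂ) ∈ spectrum ℂ (A - B)} := by
    refine ⟨-‖A - B‖, fun t ht => ?_⟩
    have h1 := spectrum.norm_le_norm_of_mem ht
    have habs : |t| ≤ ‖A - B‖ := by simpa using h1
    linarith [neg_abs_le t, abs_nonneg t]
  have hunit : IsUnit D := by
    by_contra hn
    have hmem : ((-s : ℝ) : ℂ) ∈ spectrum ℂ (A - B) := by
      rw [spectrum.mem_iff]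
      intro hu
      apply hn
      have he : (algebraMap ℂ (H →L[ℂ] H)) ((-s : ℝ) : ℂ) - (A - B) = -D := by
        rw [Algebra.algebraMap_eq_smul_one, hDdef]
        push_cast
        rw [neg_smul]
        abel
      rw [he] at hu
      simpa using hu.neg
    have hle : specInf (A - B) ≤ -s := csInf_le hbddS hmem
    linarith
  refine ⟨hunit, ?_⟩
  set δ := specInf (A - B) + s with hδdef
  have hδ : 0 < δ := by rw [hδdef]; linarith
  have hDsa : IsSelfAdjoint D := (hA.sub hB).add (sa_smul_one s)
  have hspec : ∀ t ∈ spectrum ℝ D, δ ≤ t := by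
    intro t ht
    have h1 : (t : ℂ) ∈ spectrum ℂ D := by
      have := (spectrum.algebraMap_mem_iff ℂ (R := ℝ) (a := D) (r := t)).mpr ht
      simpa using this
    have htC : ((t - s : ℝ) : ℂ) ∈ spectrum ℂ (A - B) := by
      rw [spectrum.mem_iff] at h1 ⊢
      intro hu
      apply h1
      have he : (algebraMap ℂ (H →L[ℂ] H)) ((t - s : ℝ) : ℂ) - (A - B)
          = (algebraMap ℂ (H →L[ℂ] H)) (t : ℂ) - D := by
        rw [Algebra.algebraMap_eq_smul_one, Algebra.algebraMap_eq_smul_one, hDdef]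
        push_cast
        rw [sub_smul]
        abel
      rw [← he]
      exact hu
    have hge : specInf (A - B) ≤ t - s := csInf_le hbddS htC
    rw [hδdef]
    linarith
  have hdecay : ∀ T : ℝ, 0 ≤ T → ‖Mop D T‖ ≤ Real.exp (-(T * δ)) :=
    fun T hT => Mop_norm_decay hDsa hspec hT
  have hsplit : ∀ t : ℝ, Mop D t = Real.exp (-(t * s)) • Mop (A - B) t :=
    fun t => Mop_split (A - B) s t
  -- now prove `PosImp`
  intro ζ hζ hζ0
  have hMc : Continuous fun t : ℝ => Mop D t ζ := (Mop_cont D).clm_apply continuous_const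
  have hmemM : ∀ t : ℝ, 0 ≤ t → Mop D t ζ ∈ P := by
    intro t ht
    rw [hsplit t, ContinuousLinearMap.smul_apply]
    exact cone_smul_mem hP (Real.exp_nonneg _) (Gmem A B hP hexp hBpos hζ ht)
  have hIm : ∀ T : ℝ, (Ring.inverse D) ζ - (Ring.inverse D * Mop D T) ζ
      = ∫ t in (0:ℝ)..T, Mop D t ζ := by
    intro T
    have h1 := resolvent_integral hunit T
    have hint : IntervalIntegrable (fun t => Mop D t) volume 0 T :=
      (Mop_cont D).intervalIntegrable 0 T
    have h2 : (∫ t in (0:ℝ)..T, Mop D t) ζ = ∫ t in (0:ℝ)..T, Mop D t ζ := by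
      have h3 := (ContinuousLinearMap.apply ℂ H ζ).intervalIntegral_comp_comm hint
      exact h3.symm
    rw [← h2, h1]
    simp [ContinuousLinearMap.sub_apply]
  have hrem : ∀ n : ℕ, ‖(Ring.inverse D * Mop D (n : ℝ)) ζ‖
      ≤ (‖Ring.inverse D‖ * ‖ζ‖) * Real.exp (-((n : ℝ) * δ)) := by
    intro n
    calc ‖(Ring.inverse D * Mop D (n : ℝ)) ζ‖
        ≤ ‖Ring.inverse D * Mop D (n : ℝ)‖ * ‖ζ‖ :=
          (Ring.inverse D * Mop D (n : ℝ)).le_opNorm ζ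
      _ ≤ (‖Ring.inverse D‖ * ‖Mop D (n : ℝ)‖) * ‖ζ‖ :=
          mul_le_mul_of_nonneg_right (norm_mul_le _ _) (norm_nonneg _)
      _ ≤ (‖Ring.inverse D‖ * Real.exp (-((n : ℝ) * δ))) * ‖ζ‖ := by
          have hd := hdecay (n : ℝ) (Nat.cast_nonneg n)
          have := mul_le_mul_of_nonneg_left hd (norm_nonneg (Ring.inverse D))
          exact mul_le_mul_of_nonneg_right this (norm_nonneg _)
      _ = (‖Ring.inverse D‖ * ‖ζ‖) * Real.exp (-((n : ℝ) * δ)) := by ring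
  have hexp0 : Filter.Tendsto (fun n : ℕ => Real.exp (-((n : ℝ) * δ))) Filter.atTop (nhds 0) := by
    have h1 : ∀ n : ℕ, Real.exp (-((n : ℝ) * δ)) = (Real.exp (-δ)) ^ n := by
      intro n
      rw [← Real.exp_nat_mul]
      congr 1
      ring
    simp only [h1]
    exact tendsto_pow_atTop_nhds_zero_of_lt_one (Real.exp_nonneg _)
      (Real.exp_lt_one_iff.mpr (by linarith))
  have hconv : Filter.Tendsto (fun n : ℕ => ∫ t in (0:ℝ)..(n : ℝ), Mop D t ζ)
      Filter.atTop (nhds ((Ring.inverse D) ζ)) := by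
    rw [tendsto_iff_norm_sub_tendsto_zero]
    have hle : ∀ n : ℕ, ‖(∫ t in (0:ℝ)..(n : ℝ), Mop D t ζ) - (Ring.inverse D) ζ‖
        ≤ (‖Ring.inverse D‖ * ‖ζ‖) * Real.exp (-((n : ℝ) * δ)) := by
      intro n
      have h1 := hIm (n : ℝ)
      have h2 : (∫ t in (0:ℝ)..(n : ℝ), Mop D t ζ) - (Ring.inverse D) ζ
          = -((Ring.inverse D * Mop D (n : ℝ)) ζ) := by
        rw [← h1]; abel
      rw [h2, norm_neg]
      exact hrem n
    refine squeeze_zero (fun n => norm_nonneg _) hle ?_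
    simpa using hexp0.const_mul (‖Ring.inverse D‖ * ‖ζ‖)
  have hinvmem : (Ring.inverse D) ζ ∈ P := by
    refine hP.1.mem_of_tendsto hconv (Filter.Eventually.of_forall fun n => ?_)
    exact integral_mem_cone hP (Nat.cast_nonneg n) hMc fun t ht => hmemM t ht.1
  refine ⟨hinvmem, ?_⟩
  intro ξ hξ hξ0
  have hφcont : Continuous fun t : ℝ => (inner ℂ ξ (Mop D t ζ) : ℂ).re :=
    Complex.continuous_re.comp (continuous_const.inner hMc)
  have hφnonneg : ∀ t : ℝ, 0 ≤ t → 0 ≤ (inner ℂ ξ (Mop D t ζ) : ℂ).re :=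
    fun t ht => ((cx_nonneg_iff _).1 (cone_inner_nonneg hP hξ (hmemM t ht))).1
  have hφpos : ∀ t : ℝ, 0 < t → 0 < (inner ℂ ξ (Mop D t ζ) : ℂ).re := by
    intro t ht
    rw [hsplit t, ContinuousLinearMap.smul_apply]
    have hcoe : (Real.exp (-(t * s))) • (Mop (A - B) t ζ)
        = ((Real.exp (-(t * s)) : ℝ) : ℂ) • (Mop (A - B) t ζ) := by
      rw [Complex.coe_smul]
    rw [hcoe, inner_smul_right]
    have hsp := strict_pos A B hP hA hB hexp hBerg ht hζ hζ0 hξ hξ0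
    have hre := ((cx_pos_iff _).1 hsp).1
    rw [Complex.re_ofReal_mul]
    exact mul_pos (Real.exp_pos _) hre
  have hint01 : IntervalIntegrable (fun t => (inner ℂ ξ (Mop D t ζ) : ℂ).re) volume 0 1 :=
    hφcont.intervalIntegrable 0 1
  set c := ∫ t in (0:ℝ)..1, (inner ℂ ξ (Mop D t ζ) : ℂ).re with hcdef
  have hc : 0 < c :=
    intervalIntegral_pos_of_pos_on hint01 (fun t ht => hφpos t ht.1) one_pos
  obtain ⟨n, hn1, hnsmall⟩ : ∃ n : ℕ, 1 ≤ n ∧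
      ‖ξ‖ * ((‖Ring.inverse D‖ * ‖ζ‖) * Real.exp (-((n : ℝ) * δ))) < c := by
    have ht2 : Filter.Tendsto
        (fun n : ℕ => ‖ξ‖ * ((‖Ring.inverse D‖ * ‖ζ‖) * Real.exp (-((n : ℝ) * δ))))
        Filter.atTop (nhds 0) := by
      simpa using (hexp0.const_mul (‖Ring.inverse D‖ * ‖ζ‖)).const_mul ‖ξ‖
    have hev := ht2.eventually (gt_mem_nhds hc)
    obtain ⟨n, hn⟩ := (hev.and (Filter.eventually_ge_atTop 1)).exists
    exact ⟨n, hn.2, hn.1⟩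
  -- the real part identity at time n
  have h3 : (inner ℂ ξ ((Ring.inverse D) ζ) : ℂ).re
      = (∫ t in (0:ℝ)..(n : ℝ), (inner ℂ ξ (Mop D t ζ) : ℂ).re)
        + (inner ℂ ξ ((Ring.inverse D * Mop D (n : ℝ)) ζ) : ℂ).re := by
    have hvec := hIm (n : ℝ)
    have h4 : (inner ℂ ξ ((Ring.inverse D) ζ - (Ring.inverse D * Mop D (n : ℝ)) ζ) : ℂ)
        = ∫ t in (0:ℝ)..(n : ℝ), (inner ℂ ξ (Mop D t ζ) : ℂ) := by
      rw [hvec]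
      exact inner_integral ξ hMc (n : ℝ)
    rw [inner_sub_right] at h4
    have h5 := congrArg Complex.re h4
    rw [Complex.sub_re, re_integral (continuous_const.inner hMc)] at h5
    linarith
  have h4 : c ≤ ∫ t in (0:ℝ)..(n : ℝ), (inner ℂ ξ (Mop D t ζ) : ℂ).re := by
    have hn1' : (1 : ℝ) ≤ (n : ℝ) := by exact_mod_cast hn1
    have hint1n : IntervalIntegrable (fun t => (inner ℂ ξ (Mop D t ζ) : ℂ).re) volume 1 (n : ℝ) :=
      hφcont.intervalIntegrable 1 (n : ℝ)
    have hadd := intervalIntegral.integral_add_adjacent_intervals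
      (a := (0:ℝ)) (b := 1) (c := (n : ℝ)) hint01 hint1n
    have h5 : 0 ≤ ∫ t in (1:ℝ)..(n : ℝ), (inner ℂ ξ (Mop D t ζ) : ℂ).re :=
      intervalIntegral.integral_nonneg hn1' fun u hu => hφnonneg u (by linarith [hu.1])
    rw [hcdef, ← hadd]
    linarith
  have h5 : |(inner ℂ ξ ((Ring.inverse D * Mop D (n : ℝ)) ζ) : ℂ).re|
      ≤ ‖ξ‖ * ((‖Ring.inverse D‖ * ‖ζ‖) * Real.exp (-((n : ℝ) * δ))) := by
    calc |(inner ℂ ξ ((Ring.inverse D * Mop D (n : ℝ)) ζ) : ℂ).re|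
        ≤ ‖(inner ℂ ξ ((Ring.inverse D * Mop D (n : ℝ)) ζ) : ℂ)‖ := by
          exact Complex.abs_re_le_norm _
      _ ≤ ‖ξ‖ * ‖(Ring.inverse D * Mop D (n : ℝ)) ζ‖ := norm_inner_le_norm _ _
      _ ≤ ‖ξ‖ * ((‖Ring.inverse D‖ * ‖ζ‖) * Real.exp (-((n : ℝ) * δ))) :=
          mul_le_mul_of_nonneg_left (hrem n) (norm_nonneg ξ)
  have hrepos : 0 < (inner ℂ ξ ((Ring.inverse D) ζ) : ℂ).re := by
    have := (abs_le.mp h5).1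
    linarith
  have him0 : (inner ℂ ξ ((Ring.inverse D) ζ) : ℂ).im = 0 :=
    ((cx_nonneg_iff _).1 (cone_inner_nonneg hP hξ hinvmem)).2
  exact (cx_pos_iff _).2 ⟨hrepos, him0⟩
end
end

section
/- Let 𝔓 be a self-dual cone in a complex Hilbert space ℌ, let A be a bounded linear operator on ℌ that is ergodic w.r.t. 𝔓, let n ≥ 1, and let B be a bounded linear operator on ℂⁿ that is ergodic w.r.t. the nonnegative orthant ℝ₊ⁿ, with matrix entries B_{ij} = ⟨eᵢ, Beⱼ⟩ in the standard basis. Then the bounded operator C on ℌⁿ defined by (Cξ)ᵢ = Aξᵢ + Σⱼ B_{ij} ξⱼ (that is, C = A ⊗ 1 + 1 ⊗ B) is ergodic w.r.t. the product cone 𝔔 = {ξ ∈ ℌⁿ : ξᵢ ∈ 𝔓 for all i}. -/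
open scoped ComplexOrder

noncomputable section

variable {H : Type*} [NormedAddCommGroup H] [InnerProductSpace ℂ H]

section SDC
variable {P : Set H}

lemma sdc_zero_mem (hP : IsSelfDualCone P) : (0 : H) ∈ P := by
  rw [hP.2.2.2]; intro ξ _; simp

lemma sdc_add_mem (hP : IsSelfDualCone P) {x y : H} (hx : x ∈ P) (hy : y ∈ P) : x + y ∈ P := by
  have h := hP.2.1 hx hy (by norm_num : (0:ℝ) ≤ 1/2) (by norm_num : (0:ℝ) ≤ 1/2) (by norm_num)
  have h2 := hP.2.2.1 2 (by norm_num) _ h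
  have : (2:ℝ) • ((1/2:ℝ) • x + (1/2:ℝ) • y) = x + y := by
    rw [smul_add, smul_smul, smul_smul]; norm_num
  rwa [this] at h2

lemma sdc_smul_mem (hP : IsSelfDualCone P) {c : ℂ} (hc : 0 ≤ c) {x : H} (hx : x ∈ P) :
    c • x ∈ P := by
  rw [Complex.le_def] at hc
  have : c = ((c.re : ℝ) : ℂ) := by apply Complex.ext <;> simp [← hc.2]
  rw [this, Complex.coe_smul]
  exact hP.2.2.1 c.re (by simpa using hc.1) x hx

lemma sdc_inner_nonneg (hP : IsSelfDualCone P) {x y : H} (hx : x ∈ P) (hy : y ∈ P) :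
    0 ≤ (inner ℂ x y : ℂ) := by
  have := hP.2.2.2 ▸ hx
  exact this y hy

lemma sdc_sum_mem (hP : IsSelfDualCone P) {ι : Type*} (s : Finset ι) {f : ι → H}
    (hf : ∀ i ∈ s, f i ∈ P) : ∑ i ∈ s, f i ∈ P := by
  classical
  induction s using Finset.induction_on with
  | empty => simpa using sdc_zero_mem hP
  | insert _ _ hns ih =>
    rw [Finset.sum_insert hns]
    exact sdc_add_mem hP (hf _ (Finset.mem_insert_self _ _))
      (ih fun i hi => hf i (Finset.mem_insert_of_mem hi))

lemma pospres_pow {A : H →L[ℂ] H} (hA : ∀ x ∈ P, A x ∈ P) (m : ℕ) :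
    ∀ x ∈ P, (A ^ m) x ∈ P := by
  induction m with
  | zero => simpa using fun x hx => hx
  | succ m ih =>
    intro x hx
    rw [pow_succ, ContinuousLinearMap.mul_apply]
    exact ih _ (hA x hx)

end SDC

section Ops

def opA (n : ℕ) (A : H →L[ℂ] H) :
    PiLp 2 (fun _ : Fin n => H) →L[ℂ] PiLp 2 (fun _ : Fin n => H) :=
  (PiLp.continuousLinearEquiv 2 ℂ (fun _ : Fin n => H)).symm.toContinuousLinearMap ∘L
    (ContinuousLinearMap.pi fun i => A ∘L ContinuousLinearMap.proj i) ∘L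
    (PiLp.continuousLinearEquiv 2 ℂ (fun _ : Fin n => H)).toContinuousLinearMap

lemma opA_apply (n : ℕ) (A : H →L[ℂ] H) (ξ : PiLp 2 (fun _ : Fin n => H)) (i : Fin n) :
    opA n A ξ i = A (ξ i) := rfl

lemma opA_pow_apply (n : ℕ) (A : H →L[ℂ] H) (m : ℕ) (ξ : PiLp 2 (fun _ : Fin n => H))
    (i : Fin n) : ((opA n A) ^ m) ξ i = (A ^ m) (ξ i) := by
  induction m generalizing ξ with
  | zero => simp
  | succ m ih =>
    rw [pow_succ', pow_succ', ContinuousLinearMap.mul_apply, ContinuousLinearMap.mul_apply,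
      opA_apply, ih]

def opB (n : ℕ) (c : Fin n → Fin n → ℂ) :
    PiLp 2 (fun _ : Fin n => H) →L[ℂ] PiLp 2 (fun _ : Fin n => H) :=
  (PiLp.continuousLinearEquiv 2 ℂ (fun _ : Fin n => H)).symm.toContinuousLinearMap ∘L
    (ContinuousLinearMap.pi fun i => ∑ j : Fin n, c i j • ContinuousLinearMap.proj j) ∘L
    (PiLp.continuousLinearEquiv 2 ℂ (fun _ : Fin n => H)).toContinuousLinearMap

lemma opB_apply (n : ℕ) (c : Fin n → Fin n → ℂ) (ξ : PiLp 2 (fun _ : Fin n => H)) (i : Fin n) :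
    opB n c ξ i = ∑ j : Fin n, c i j • ξ j := by
  simp [opB, ContinuousLinearMap.sum_apply]

lemma commute_opA_opB (n : ℕ) (A : H →L[ℂ] H) (c : Fin n → Fin n → ℂ) :
    Commute (opA n A) (opB n c) := by
  apply ContinuousLinearMap.ext
  intro ξ
  ext i
  rw [ContinuousLinearMap.mul_apply, ContinuousLinearMap.mul_apply, opA_apply, opB_apply,
    opB_apply, map_sum]
  congr 1; funext j
  rw [map_smul, opA_apply]

end Ops

section Ent

def ent (n : ℕ) (B : EuclideanSpace ℂ (Fin n) →L[ℂ] EuclideanSpace ℂ (Fin n))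
    (l : ℕ) (i j : Fin n) : ℂ :=
  inner ℂ (EuclideanSpace.single i (1:ℂ)) ((B ^ l) (EuclideanSpace.single j (1:ℂ)))

lemma ent_eq_apply (n : ℕ) (B : EuclideanSpace ℂ (Fin n) →L[ℂ] EuclideanSpace ℂ (Fin n))
    (l : ℕ) (i j : Fin n) : ent n B l i j = (B ^ l) (EuclideanSpace.single j (1:ℂ)) i := by
  simp [ent, EuclideanSpace.inner_single_left]

lemma eucl_decomp (n : ℕ) (y : EuclideanSpace ℂ (Fin n)) :
    y = ∑ j : Fin n, y j • EuclideanSpace.single j (1:ℂ) := by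
  ext k
  rw [WithLp.ofLp_sum, Finset.sum_apply k Finset.univ]
  simp [EuclideanSpace.single_apply]

lemma matrix_rep (n : ℕ) (B : EuclideanSpace ℂ (Fin n) →L[ℂ] EuclideanSpace ℂ (Fin n))
    (y : EuclideanSpace ℂ (Fin n)) (i : Fin n) :
    B y i = ∑ j : Fin n, ent n B 1 i j * y j := by
  conv_lhs => rw [eucl_decomp n y]
  rw [map_sum, WithLp.ofLp_sum, Finset.sum_apply i Finset.univ]
  congr 1; funext j
  rw [map_smul, ent_eq_apply, pow_one]
  simp [mul_comm]

lemma ent_succ (n : ℕ) (B : EuclideanSpace ℂ (Fin n) →L[ℂ] EuclideanSpace ℂ (Fin n))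
    (l : ℕ) (i p : Fin n) :
    ent n B (l+1) i p = ∑ j : Fin n, ent n B 1 i j * ent n B l j p := by
  rw [ent_eq_apply, pow_succ', ContinuousLinearMap.mul_apply, matrix_rep]
  simp_rw [← ent_eq_apply]

lemma ent_zero (n : ℕ) (B : EuclideanSpace ℂ (Fin n) →L[ℂ] EuclideanSpace ℂ (Fin n))
    (i j : Fin n) : ent n B 0 i j = if i = j then 1 else 0 := by
  rw [ent_eq_apply, pow_zero]
  simp [EuclideanSpace.single_apply]

lemma ent_nonneg (n : ℕ) (B : EuclideanSpace ℂ (Fin n) →L[ℂ] EuclideanSpace ℂ (Fin n))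
    (hB : PosPres {x : EuclideanSpace ℂ (Fin n) | ∀ i, 0 ≤ x i} B) (l : ℕ) (i j : Fin n) :
    0 ≤ ent n B l i j := by
  rw [ent_eq_apply]
  refine pospres_pow hB l _ ?_ i
  intro k
  simp [EuclideanSpace.single_apply]
  split <;> norm_num

lemma opB_pow_apply (n : ℕ) (B : EuclideanSpace ℂ (Fin n) →L[ℂ] EuclideanSpace ℂ (Fin n))
    (l : ℕ) (ξ : PiLp 2 (fun _ : Fin n => H)) (i : Fin n) :
    ((opB n (ent n B 1) : PiLp 2 (fun _ : Fin n => H) →L[ℂ] _) ^ l) ξ i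
      = ∑ j : Fin n, ent n B l i j • ξ j := by
  induction l generalizing ξ i with
  | zero =>
    simp only [pow_zero, ContinuousLinearMap.one_apply, ent_zero]
    rw [Finset.sum_eq_single i]
    · simp
    · intro b _ hb; simp [Ne.symm hb]
    · intro h; exact absurd (Finset.mem_univ i) h
  | succ l ih =>
    rw [pow_succ', ContinuousLinearMap.mul_apply, opB_apply]
    simp_rw [ih, Finset.smul_sum, smul_smul]
    rw [Finset.sum_comm]
    simp_rw [← Finset.sum_smul, ← ent_succ]

end Ent

/-- Proposition A.9 (composition of ergodic operators): if `A` is ergodic w.r.t. `P`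
and `B` (an operator on `ℂⁿ`) is ergodic w.r.t. the nonnegative orthant `ℝ₊ⁿ`, then
`C = A ⊗ 1 + 1 ⊗ B`, acting on `ℌⁿ ≅ ℌ ⊗ ℂⁿ` by
`(Cξ)ᵢ = Aξᵢ + Σⱼ Bᵢⱼ ξⱼ`, is ergodic w.r.t. the product cone. -/
theorem ergodic_tensor_sum (P : Set H) (hP : IsSelfDualCone P)
    (A : H →L[ℂ] H) (hA : IsErgodic P A) (n : ℕ) (hn : 1 ≤ n)
    (B : EuclideanSpace ℂ (Fin n) →L[ℂ] EuclideanSpace ℂ (Fin n))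
    (hB : IsErgodic {x : EuclideanSpace ℂ (Fin n) | ∀ i, 0 ≤ x i} B)
    (C : PiLp 2 (fun _ : Fin n => H) →L[ℂ] PiLp 2 (fun _ : Fin n => H))
    (hC : ∀ (ξ : PiLp 2 (fun _ : Fin n => H)) (i : Fin n),
      C ξ i = A (ξ i) + ∑ j : Fin n,
        (inner ℂ (EuclideanSpace.single i (1 : ℂ)) (B (EuclideanSpace.single j (1 : ℂ))) : ℂ)
          • ξ j) :
    IsErgodic {ξ : PiLp 2 (fun _ : Fin n => H) | ∀ i, ξ i ∈ P} C := by
  have hent : ∀ i j : Fin n,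
      (inner ℂ (EuclideanSpace.single i (1:ℂ)) (B (EuclideanSpace.single j (1:ℂ))) : ℂ)
        = ent n B 1 i j := by
    intro i j; rw [ent, pow_one]
  have hent_nonneg := ent_nonneg n B hB.1
  have hCeq : C = opA n A + opB n (ent n B 1) := by
    apply ContinuousLinearMap.ext
    intro ξ
    ext i
    rw [ContinuousLinearMap.add_apply, PiLp.add_apply, hC, opA_apply, opB_apply]
    simp_rw [hent]
  have hQpres : PosPres {ξ : PiLp 2 (fun _ : Fin n => H) | ∀ i, ξ i ∈ P} C := by
    intro ξ hξ i
    rw [hC]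
    refine sdc_add_mem hP (hA.1 _ (hξ i)) (sdc_sum_mem hP _ fun j _ => ?_)
    rw [hent]
    exact sdc_smul_mem hP (hent_nonneg 1 i j) (hξ j)
  refine ⟨hQpres, ?_⟩
  intro ξ hξ hξ0 η hη hη0
  have hex : ∀ (ζ : PiLp 2 (fun _ : Fin n => H)), ζ ≠ 0 → ∃ i, ζ i ≠ 0 := by
    intro ζ hζ
    by_contra h
    push_neg at h
    exact hζ (by ext i; simp [h i])
  obtain ⟨i0, hi0⟩ := hex ξ hξ0
  obtain ⟨j0, hj0⟩ := hex η hη0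
  obtain ⟨m, hm⟩ := hA.2 (ξ i0) (hξ i0) hi0 (η j0) (hη j0) hj0
  have hsingle_mem : ∀ i : Fin n,
      (EuclideanSpace.single i (1:ℂ)) ∈ {x : EuclideanSpace ℂ (Fin n) | ∀ k, 0 ≤ x k} := by
    intro i k
    simp only [EuclideanSpace.single_apply]
    split <;> norm_num
  have hsingle_ne : ∀ i : Fin n, EuclideanSpace.single i (1:ℂ) ≠ 0 := by
    intro i h
    have := congrArg (fun x : EuclideanSpace ℂ (Fin n) => x i) h
    simp [EuclideanSpace.single_apply] at this
  obtain ⟨l, hl⟩ := hB.2 _ (hsingle_mem i0) (hsingle_ne i0) _ (hsingle_mem j0) (hsingle_ne j0)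
  have hl' : 0 < ent n B l i0 j0 := hl
  refine ⟨m + l, ?_⟩
  rw [hCeq, (commute_opA_opB n A (ent n B 1)).add_pow', ContinuousLinearMap.sum_apply, inner_sum]
  simp_rw [← Nat.cast_smul_eq_nsmul ℂ, ContinuousLinearMap.smul_apply, inner_smul_right,
    ContinuousLinearMap.mul_apply]
  have hterm : ∀ a b : ℕ,
      (inner ℂ ξ (((opA n A) ^ a) (((opB n (ent n B 1)) ^ b) η)) : ℂ)
        = ∑ i : Fin n, ∑ j : Fin n, ent n B b i j * (inner ℂ (ξ i) ((A ^ a) (η j)) : ℂ) := by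
    intro a b
    rw [PiLp.inner_apply]
    congr 1
    funext i
    rw [opA_pow_apply, opB_pow_apply, map_sum, inner_sum]
    congr 1
    funext j
    rw [map_smul, inner_smul_right]
  have hsum_nonneg : ∀ a b : ℕ, (0:ℂ) ≤
      ∑ i : Fin n, ∑ j : Fin n, ent n B b i j * (inner ℂ (ξ i) ((A ^ a) (η j)) : ℂ) := by
    intro a b
    refine Finset.sum_nonneg fun i _ => Finset.sum_nonneg fun j _ => ?_
    exact mul_nonneg (hent_nonneg b i j)
      (sdc_inner_nonneg hP (hξ i) (pospres_pow hA.1 a _ (hη j)))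
  apply Finset.sum_pos'
  · intro p _
    rw [hterm p.1 p.2]
    exact mul_nonneg (by exact_mod_cast Nat.cast_nonneg _) (hsum_nonneg p.1 p.2)
  · refine ⟨(m, l), Finset.HasAntidiagonal.mem_antidiagonal.mpr rfl, ?_⟩
    rw [hterm m l]
    refine mul_pos ?_ ?_
    · exact_mod_cast Nat.cast_pos.mpr (Nat.choose_pos (Nat.le_add_right m l))
    · refine Finset.sum_pos' (fun i _ => Finset.sum_nonneg fun j _ =>
        mul_nonneg (hent_nonneg l i j)
          (sdc_inner_nonneg hP (hξ i) (pospres_pow hA.1 m _ (hη j)))) ?_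
      refine ⟨i0, Finset.mem_univ _, ?_⟩
      refine Finset.sum_pos' (fun j _ => mul_nonneg (hent_nonneg l i0 j)
        (sdc_inner_nonneg hP (hξ i0) (pospres_pow hA.1 m _ (hη j)))) ?_
      exact ⟨j0, Finset.mem_univ _, mul_pos hl' hm⟩
end
end

section
/- Let k ≥ 1 and, for j = 1, …, k, let Yⱼ be an nⱼ × nⱼ real matrix that is ergodic w.r.t. the nonnegative orthant ℝ₊^{nⱼ}. Let M be the real matrix indexed by the product index set ∏ⱼ {1, …, nⱼ} with entries M(a, b) = Σ_{j=1}^{k} Yⱼ(aⱼ, bⱼ) · ∏_{i ≠ j} [aᵢ = bᵢ] (the Kronecker sum Σⱼ 1 ⊗ ⋯ ⊗ Yⱼ ⊗ ⋯ ⊗ 1, where [aᵢ = bᵢ] is 1 if aᵢ = bᵢ and 0 otherwise). Then M is ergodic w.r.t. the nonnegative orthant of ℝ^{n₁⋯n_k}. -/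
noncomputable section

open scoped Matrix

/-- A real square matrix is ergodic w.r.t. the nonnegative orthant: it maps the orthant
into itself, and for all nonzero `x, y` in the orthant some power `Y^ℓ` satisfies
`⟨x, Y^ℓ y⟩ > 0`. -/
def MatErgodic {m : Type*} [Fintype m] [DecidableEq m] (Y : Matrix m m ℝ) : Prop :=
  (∀ x : m → ℝ, (∀ i, 0 ≤ x i) → ∀ i, 0 ≤ Y.mulVec x i) ∧
  ∀ x y : m → ℝ, (∀ i, 0 ≤ x i) → (∀ i, 0 ≤ y i) → x ≠ 0 → y ≠ 0 →
    ∃ ℓ : ℕ, 0 < x ⬝ᵥ (Y ^ ℓ).mulVec y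

lemma aux_entry_nonneg {m : Type*} [Fintype m] [DecidableEq m] (Y : Matrix m m ℝ)
    (h : ∀ x : m → ℝ, (∀ i, 0 ≤ x i) → ∀ i, 0 ≤ Y.mulVec x i) (a b : m) : 0 ≤ Y a b := by
  have := h (Pi.single b 1) (fun i => by
    by_cases hib : i = b <;> simp [Pi.single_apply, hib]) a
  simpa [Matrix.mulVec_single] using this

lemma aux_pow_entry_nonneg {m : Type*} [Fintype m] [DecidableEq m] (Y : Matrix m m ℝ)
    (h : ∀ a b, 0 ≤ Y a b) (ℓ : ℕ) : ∀ a b, 0 ≤ (Y ^ ℓ) a b := by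
  induction ℓ with
  | zero => intro a b; simp [Matrix.one_apply]; positivity
  | succ ℓ ih =>
    intro a b
    rw [pow_succ, Matrix.mul_apply]
    exact Finset.sum_nonneg fun c _ => mul_nonneg (ih a c) (h c b)

/-- `Y` ergodic gives a power with positive `(a,b)` entry. -/
lemma aux_exists_pow_pos {m : Type*} [Fintype m] [DecidableEq m] (Y : Matrix m m ℝ)
    (h : MatErgodic Y) (a b : m) : ∃ ℓ : ℕ, 0 < (Y ^ ℓ) a b := by
  obtain ⟨ℓ, hℓ⟩ := h.2 (Pi.single a 1) (Pi.single b 1)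
    (fun i => by by_cases hia : i = a <;> simp [Pi.single_apply, hia])
    (fun i => by by_cases hib : i = b <;> simp [Pi.single_apply, hib])
    (fun hz => by simpa using congrFun hz a) (fun hz => by simpa using congrFun hz b)
  refine ⟨ℓ, ?_⟩
  simpa [single_dotProduct, Matrix.mulVec_single] using hℓ


/-- Lemma B.2: the Kronecker sum `M = Σⱼ 1 ⊗ ⋯ ⊗ Yⱼ ⊗ ⋯ ⊗ 1` of ergodic matrices
`Yⱼ` (each ergodic w.r.t. the nonnegative orthant of `ℝ^{nⱼ}`) is ergodic w.r.t. the
nonnegative orthant of `ℝ^{n₁⋯n_k}`. -/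
theorem kronecker_sum_ergodic (k : ℕ) (hk : 1 ≤ k) (n : Fin k → ℕ)
    (Y : ∀ j, Matrix (Fin (n j)) (Fin (n j)) ℝ) (hY : ∀ j, MatErgodic (Y j))
    (M : Matrix (∀ j, Fin (n j)) (∀ j, Fin (n j)) ℝ)
    (hM : ∀ a b, M a b = ∑ j, Y j (a j) (b j) *
      ∏ i ∈ Finset.univ.erase j, (if a i = b i then (1 : ℝ) else 0)) :
    MatErgodic M := by
  classical
  have hYnn : ∀ j a b, 0 ≤ Y j a b := fun j => aux_entry_nonneg _ (hY j).1
  -- entries of M are nonnegative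
  have hMnn : ∀ a b, 0 ≤ M a b := by
    intro a b
    rw [hM]
    refine Finset.sum_nonneg fun j _ => mul_nonneg (hYnn j _ _) (Finset.prod_nonneg ?_)
    intro i _; positivity
  have hMpownn : ∀ ℓ a b, 0 ≤ (M ^ ℓ) a b := fun ℓ => aux_pow_entry_nonneg M hMnn ℓ
  -- resummation over an update slice
  have key : ∀ (j0 : Fin k) (a : ∀ j, Fin (n j)) (f : (∀ j, Fin (n j)) → ℝ),
      ∑ c, (∏ i ∈ Finset.univ.erase j0, (if a i = c i then (1:ℝ) else 0)) * f c
        = ∑ t, f (Function.update a j0 t) := by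
    intro j0 a f
    have h1 : ∀ c : ∀ j, Fin (n j),
        (∏ i ∈ Finset.univ.erase j0, (if a i = c i then (1:ℝ) else 0)) * f c
          = if (∀ i ∈ Finset.univ.erase j0, a i = c i) then f c else 0 := by
      intro c
      by_cases hP : ∀ i ∈ Finset.univ.erase j0, a i = c i
      · rw [Finset.prod_boole, if_pos hP, if_pos hP, one_mul]
      · rw [Finset.prod_boole, if_neg hP, if_neg hP, zero_mul]
    rw [Finset.sum_congr rfl (fun c _ => h1 c), Finset.sum_ite, Finset.sum_const_zero, add_zero]
    have himg : Finset.univ.filter (fun c => ∀ i ∈ Finset.univ.erase j0, a i = c i)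
        = Finset.image (Function.update a j0) Finset.univ := by
      ext c
      simp only [Finset.mem_filter, Finset.mem_image, Finset.mem_univ, true_and]
      constructor
      · intro hc
        refine ⟨c j0, funext fun i => ?_⟩
        by_cases hij : i = j0
        · subst hij; simp
        · rw [Function.update_of_ne hij]
          exact hc i (Finset.mem_erase.mpr ⟨hij, Finset.mem_univ i⟩)
      · rintro ⟨t, rfl⟩ i hi
        rw [Function.update_of_ne (Finset.mem_erase.mp hi).1]
    rw [himg, Finset.sum_image (fun t _ t' _ h => Function.update_injective a j0 h)]
  -- main inequality: M^ℓ dominates the Kronecker product of Y j ^ L j when ∑ L = ℓ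
  have main : ∀ (ℓ : ℕ) (L : Fin k → ℕ), (∑ j, L j) = ℓ → ∀ a b,
      (∏ j, (Y j ^ L j) (a j) (b j)) ≤ (M ^ ℓ) a b := by
    intro ℓ
    induction ℓ with
    | zero =>
      intro L hL a b
      have hL0 : ∀ j, L j = 0 := by
        intro j
        have := Finset.sum_eq_zero_iff.mp hL
        exact this j (Finset.mem_univ j)
      refine le_of_eq ?_
      have : ∀ j, (Y j ^ L j) (a j) (b j) = if a j = b j then (1:ℝ) else 0 := by
        intro j; rw [hL0 j, pow_zero, Matrix.one_apply]
      rw [Finset.prod_congr rfl (fun j _ => this j), Finset.prod_boole, pow_zero,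
        Matrix.one_apply]
      congr 1
      simp [funext_iff]
    | succ ℓ ih =>
      intro L hL a b
      -- find j0 with L j0 > 0
      have hex : ∃ j0, 0 < L j0 := by
        by_contra hcon
        push_neg at hcon
        have : (∑ j, L j) = 0 := Finset.sum_eq_zero fun j _ => Nat.le_zero.mp (hcon j)
        omega
      obtain ⟨j0, hj0⟩ := hex
      obtain ⟨m, hm⟩ : ∃ m, L j0 = m + 1 := ⟨L j0 - 1, by omega⟩
      set L' : Fin k → ℕ := Function.update L j0 m with hL'def
      have hsum' : (∑ j, L' j) = ℓ := by
        have h1 : (∑ j, L' j) = m + ∑ j ∈ Finset.univ \ {j0}, L j := by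
          rw [hL'def, Finset.sum_update_of_mem (Finset.mem_univ j0)]
        have h2 : L j0 + ∑ j ∈ Finset.univ \ {j0}, L j = ℓ + 1 := by
          rw [Finset.sdiff_singleton_eq_erase, Finset.add_sum_erase _ _ (Finset.mem_univ j0)]
          exact hL
        omega
      have hIH := ih L' hsum'
      -- N L' entries nonneg
      have hNnn : ∀ (K : Fin k → ℕ) (c d : ∀ j, Fin (n j)),
          0 ≤ ∏ j, (Y j ^ K j) (c j) (d j) :=
        fun K c d => Finset.prod_nonneg fun j _ =>
          aux_pow_entry_nonneg (Y j) (hYnn j) (K j) _ _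
      rw [pow_succ', Matrix.mul_apply]
      -- step 1 : replace M^ℓ by N L'
      have step1 : ∑ c, M a c * (∏ j, (Y j ^ L' j) (c j) (b j))
          ≤ ∑ c, M a c * (M ^ ℓ) c b :=
        Finset.sum_le_sum fun c _ => mul_le_mul_of_nonneg_left (hIH c b) (hMnn a c)
      refine le_trans ?_ step1
      -- step 2 : replace M a c by the j0 summand
      have step2 : ∀ c, (Y j0 (a j0) (c j0) *
            ∏ i ∈ Finset.univ.erase j0, (if a i = c i then (1:ℝ) else 0))
          ≤ M a c := by
        intro c
        rw [hM]
        refine Finset.single_le_sum (f := fun j => Y j (a j) (c j) *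
          ∏ i ∈ Finset.univ.erase j, (if a i = c i then (1:ℝ) else 0)) ?_ (Finset.mem_univ j0)
        intro j _
        refine mul_nonneg (hYnn j _ _) (Finset.prod_nonneg fun i _ => ?_)
        positivity
      have step2' : ∑ c : ∀ j, Fin (n j), (Y j0 (a j0) (c j0) *
            ∏ i ∈ Finset.univ.erase j0, (if a i = c i then (1:ℝ) else 0)) *
            (∏ j, (Y j ^ L' j) (c j) (b j))
          ≤ ∑ c, M a c * (∏ j, (Y j ^ L' j) (c j) (b j)) :=
        Finset.sum_le_sum fun c _ =>
          mul_le_mul_of_nonneg_right (step2 c) (hNnn L' c b)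
      refine le_trans (le_of_eq ?_) step2'
      -- now an equality: N L a b = the sum over c of the j0 summand times N L'
      have rearr : ∀ c : ∀ j, Fin (n j),
          (Y j0 (a j0) (c j0) *
            ∏ i ∈ Finset.univ.erase j0, (if a i = c i then (1:ℝ) else 0)) *
            (∏ j, (Y j ^ L' j) (c j) (b j))
          = (∏ i ∈ Finset.univ.erase j0, (if a i = c i then (1:ℝ) else 0)) *
            (Y j0 (a j0) (c j0) * ∏ j, (Y j ^ L' j) (c j) (b j)) := by
        intro c; ring
      rw [Finset.sum_congr rfl fun c _ => rearr c,
        key j0 a (fun c => Y j0 (a j0) (c j0) * ∏ j, (Y j ^ L' j) (c j) (b j))]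
      simp only [Function.update_self]
      -- compute the slice sum
      have hslice : ∀ t : Fin (n j0),
          Y j0 (a j0) t * ∏ j, (Y j ^ L' j) (Function.update a j0 t j) (b j)
            = (Y j0 (a j0) t * (Y j0 ^ m) t (b j0)) *
              ∏ j ∈ Finset.univ.erase j0, (Y j ^ L j) (a j) (b j) := by
        intro t
        rw [← Finset.mul_prod_erase _ _ (Finset.mem_univ j0)]
        simp only [hL'def, Function.update_self]
        have : ∀ j ∈ Finset.univ.erase j0,
            (Y j ^ Function.update L j0 m j) (Function.update a j0 t j) (b j)
              = (Y j ^ L j) (a j) (b j) := by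
          intro j hj
          have hjne := (Finset.mem_erase.mp hj).1
          rw [Function.update_of_ne hjne, Function.update_of_ne hjne]
        rw [Finset.prod_congr rfl this]
        ring
      rw [Finset.sum_congr rfl fun t _ => hslice t, ← Finset.sum_mul]
      have hpow : ∑ t, Y j0 (a j0) t * (Y j0 ^ m) t (b j0) = (Y j0 ^ L j0) (a j0) (b j0) := by
        rw [hm, pow_succ', Matrix.mul_apply]
      rw [hpow]
      exact (Finset.mul_prod_erase Finset.univ (fun j => (Y j ^ L j) (a j) (b j))
        (Finset.mem_univ j0)).symm
  -- now prove ergodicity of M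
  constructor
  · intro x hx i
    rw [Matrix.mulVec]
    exact Finset.sum_nonneg fun c _ => mul_nonneg (hMnn i c) (hx c)
  · intro x y hx hy hx0 hy0
    obtain ⟨a, ha⟩ : ∃ a, 0 < x a := by
      by_contra hcon
      push_neg at hcon
      exact hx0 (funext fun a => le_antisymm (hcon a) (hx a))
    obtain ⟨b, hb⟩ : ∃ b, 0 < y b := by
      by_contra hcon
      push_neg at hcon
      exact hy0 (funext fun b => le_antisymm (hcon b) (hy b))
    -- choose powers for each coordinate
    choose L hLpos using fun j => aux_exists_pow_pos (Y j) (hY j) (a j) (b j)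
    refine ⟨∑ j, L j, ?_⟩
    have hMab : 0 < (M ^ (∑ j, L j)) a b :=
      lt_of_lt_of_le (Finset.prod_pos fun j _ => hLpos j) (main _ L rfl a b)
    have hinner : ∀ c, 0 ≤ (M ^ (∑ j, L j)).mulVec y c := by
      intro c
      rw [Matrix.mulVec]
      exact Finset.sum_nonneg fun d _ => mul_nonneg (hMpownn _ c d) (hy d)
    have hinner_a : 0 < (M ^ (∑ j, L j)).mulVec y a := by
      rw [Matrix.mulVec]
      calc (0:ℝ) < (M ^ (∑ j, L j)) a b * y b := mul_pos hMab hb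
        _ ≤ _ := Finset.single_le_sum (f := fun d => (M ^ (∑ j, L j)) a d * y d)
            (fun d _ => mul_nonneg (hMpownn _ a d) (hy d)) (Finset.mem_univ b)
    rw [dotProduct]
    calc (0:ℝ) < x a * (M ^ (∑ j, L j)).mulVec y a := mul_pos ha hinner_a
      _ ≤ _ := Finset.single_le_sum (f := fun c => x c * (M ^ (∑ j, L j)).mulVec y c)
          (fun c _ => mul_nonneg (hx c) (hinner c)) (Finset.mem_univ a)
end
end
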